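/- arXiv:1101.0422 — 2 statements merged into one kernel-verified Lean document; each statement's English description precedes it below -/
import Mathlib

section
/- Let γ ∈ S(I) have exactly two orbits V₁ and V₂, and let π be a premap on ±I connecting ±V₁ and ±V₂. Then χ(γ,π) = 2 if and only if for some sign ε ∈ {+1,−1}, π does not connect V₁ ∪ εV₂ to (−V₁) ∪ (−εV₂), and the permutation induced by π on V₁ ∪ εV₂ satisfies the annular-noncrossing count #(π|) + #((γ₊γ₋⁻¹)|⁻¹ π|⁻¹) = |I|. -/
def IsPremap (π : Equiv.Perm ℤ) : Prop :=
  (Equiv.neg ℤ) * π * (Equiv.neg ℤ) = π⁻¹ ∧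
    ∀ k : ℤ, k ≠ 0 → ∀ m : ℤ, (π ^ m) k ≠ -k

/-- `γ₋ = δ γ δ`, where `δ : k ↦ -k`. -/
def permMinus (γ : Equiv.Perm ℤ) : Equiv.Perm ℤ :=
  (Equiv.neg ℤ) * γ * (Equiv.neg ℤ)

/-- The number of orbits of `σ` meeting the set `S`. -/
noncomputable def orbitCountOn (σ : Equiv.Perm ℤ) (S : Set ℤ) : ℕ :=
  Nat.card (Quot (fun a b : S => σ.SameCycle a b))

/-- The set `±I = I ∪ (-I)`. -/
def pmSet (I : Finset ℤ) : Set ℤ := {k : ℤ | k ∈ I ∨ -k ∈ I}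

/-- The Euler characteristic
`χ(γ,π) = #(γ₊γ₋⁻¹)/2 + #(π)/2 + #(γ₊⁻¹π⁻¹γ₋)/2 − |I|`,
all orbits counted on `±I`. -/
noncomputable def chi (I : Finset ℤ) (γ π : Equiv.Perm ℤ) : ℚ :=
  (orbitCountOn (γ * (permMinus γ)⁻¹) (pmSet I) : ℚ) / 2 +
    (orbitCountOn π (pmSet I) : ℚ) / 2 +
    (orbitCountOn (γ⁻¹ * π⁻¹ * permMinus γ) (pmSet I) : ℚ) / 2 - I.card


theorem Equiv.Perm.inv_apply_self (f : Equiv.Perm ℤ) (x : ℤ) : f⁻¹ (f x) = x :=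
  f.symm_apply_apply x

theorem Equiv.Perm.apply_inv_self (f : Equiv.Perm ℤ) (x : ℤ) : f (f⁻¹ x) = x :=
  f.apply_symm_apply x

namespace St9

open Equiv Equiv.Perm

abbrev Pz := Equiv.Perm ℤ

/-- σ fixes everything outside S. -/
def FixOut (σ : Pz) (S : Set ℤ) : Prop := ∀ x, x ∉ S → σ x = x

lemma FixOut.mem {σ : Pz} {S : Set ℤ} (h : FixOut σ S) {x : ℤ} (hx : x ∈ S) :
    σ x ∈ S := by
  by_contra hc
  have h1 : σ (σ x) = σ x := h _ hc
  have h2 : σ x = x := σ.injective h1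
  exact hc (by rw [h2]; exact hx)

lemma FixOut.inv {σ : Pz} {S : Set ℤ} (h : FixOut σ S) : FixOut σ⁻¹ S := by
  intro x hx
  have := h x hx
  calc σ⁻¹ x = σ⁻¹ (σ x) := by rw [this]
  _ = x := σ.symm_apply_apply x

lemma FixOut.pow_mem {σ : Pz} {S : Set ℤ} (h : FixOut σ S) {x : ℤ} (hx : x ∈ S) :
    ∀ k : ℕ, (σ ^ k) x ∈ S := by
  intro k; induction k with
  | zero => simpa
  | succ n ih => rw [pow_succ', Equiv.Perm.mul_apply]; exact h.mem ih

lemma fix_pow {σ : Pz} {a : ℤ} (h : σ a = a) (k : ℕ) : (σ ^ k) a = a := by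
  induction k with
  | zero => simp
  | succ n ih => rw [pow_succ, Equiv.Perm.mul_apply, h, ih]

lemma fix_zpow {σ : Pz} {a : ℤ} (h : σ a = a) (k : ℤ) : (σ ^ k) a = a := by
  cases k with
  | ofNat n => simpa using fix_pow h n
  | negSucc n =>
      have hinv : σ⁻¹ a = a := by
        conv_lhs => rw [← h]
        exact σ.symm_apply_apply a
      rw [zpow_negSucc]
      simpa using fix_pow (σ := σ⁻¹) hinv (n+1)

/-- every point of a permutation fixing outside a finite set is periodic. -/
lemma exists_period {σ : Pz} {S : Set ℤ} (hfin : S.Finite) (h : FixOut σ S) (a : ℤ) :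
    ∃ m : ℕ, 0 < m ∧ (σ ^ m) a = a := by
  by_cases ha : a ∈ S
  · have hmap : ∀ k : ℕ, (σ ^ k) a ∈ S := h.pow_mem ha
    have : ¬ Function.Injective (fun k : ℕ => (⟨(σ ^ k) a, hmap k⟩ : S)) := by
      intro hinj
      have : Infinite S := Infinite.of_injective _ hinj
      exact (Set.infinite_coe_iff.mp this) hfin
    rw [Function.not_injective_iff] at this
    obtain ⟨i, j, hij, hne⟩ := this
    have hij' : (σ ^ i) a = (σ ^ j) a := congrArg Subtype.val hij
    clear hij
    wlog hlt : j < i generalizing i j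
    · exact this j i (Ne.symm hne) hij'.symm (by omega)
    refine ⟨i - j, by omega, ?_⟩
    have h2 : (σ ^ j) ((σ ^ (i-j)) a) = (σ ^ j) a := by
      rw [← Equiv.Perm.mul_apply, ← pow_add, Nat.add_sub_cancel' (le_of_lt hlt)]
      exact hij'
    exact (σ ^ j).injective h2
  · exact ⟨1, one_pos, by simpa using h a ha⟩

lemma zpow_apply_of_period {σ : Pz} {a : ℤ} {m : ℕ} (hm : 0 < m) (hp : (σ ^ m) a = a)
    (k : ℤ) : ∃ r : ℕ, r < m ∧ (σ ^ k) a = (σ ^ r) a := by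
  refine ⟨(k % m).toNat, ?_, ?_⟩
  · have h1 : k % m < m := Int.emod_lt_of_pos k (by exact_mod_cast hm)
    omega
  have hm' : (m : ℤ) ≠ 0 := by exact_mod_cast hm.ne'
  have hq : k = m * (k / m) + k % m := (Int.mul_ediv_add_emod k m).symm
  have hr0 : 0 ≤ k % m := Int.emod_nonneg k hm'
  have key : (σ ^ ((m : ℤ) * (k / m))) ((σ ^ (k % m)) a) = (σ ^ (k % m)) a := by
    have comm : (σ ^ ((m:ℤ) * (k / m))) = ((σ ^ m) ^ (k / m) : Pz) := by
      rw [← zpow_natCast σ m, ← zpow_mul]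
    rw [comm]
    have : ((σ ^ m) : Pz) ((σ ^ (k % m)) a) = (σ ^ (k % m)) a := by
      have : ((σ ^ m) * (σ ^ (k % m))) a = ((σ ^ (k % m)) * (σ ^ m)) a := by
        rw [← zpow_natCast σ m, ← zpow_add, ← zpow_add, add_comm]
      simp only [Equiv.Perm.mul_apply] at this
      rw [this, hp]
    exact fix_zpow this _
  calc (σ ^ k) a = (σ ^ ((m:ℤ) * (k / m) + k % m)) a := by rw [← hq]
  _ = (σ ^ ((m:ℤ) * (k / m))) ((σ ^ (k % m)) a) := by rw [zpow_add, Equiv.Perm.mul_apply]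
  _ = (σ ^ (k % m)) a := key
  _ = (σ ^ (k % m).toNat) a := by rw [← zpow_natCast σ (k % m).toNat, Int.toNat_of_nonneg hr0]

/-- For perms fixing outside a finite set, same-cycle is witnessed by a natural power. -/
lemma sameCycle_iff_pow {σ : Pz} {S : Set ℤ} (hfin : S.Finite) (h : FixOut σ S) {a b : ℤ} :
    σ.SameCycle a b ↔ ∃ k : ℕ, (σ ^ k) a = b := by
  constructor
  · rintro ⟨i, hi⟩
    obtain ⟨m, hm, hp⟩ := exists_period hfin h a
    obtain ⟨r, _, hr⟩ := zpow_apply_of_period hm hp i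
    exact ⟨r, by rw [← hr]; exact hi⟩
  · rintro ⟨k, hk⟩
    exact ⟨(k : ℤ), by simpa using hk⟩

lemma sameCycle_neg_conj {σ τ : Pz} (hconj : (Equiv.neg ℤ) * σ * (Equiv.neg ℤ) = τ) (a b : ℤ) :
    τ.SameCycle (-a) (-b) ↔ σ.SameCycle a b := by
  have hneg : (Equiv.neg ℤ)⁻¹ = Equiv.neg ℤ := rfl
  rw [← hconj]
  have : (Equiv.neg ℤ) * σ * (Equiv.neg ℤ) = (Equiv.neg ℤ) * σ * (Equiv.neg ℤ)⁻¹ := by rw [hneg]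
  rw [this, Equiv.Perm.sameCycle_conj]
  have h1 : (Equiv.neg ℤ)⁻¹ (-a) = a := by simp [hneg]
  have h2 : (Equiv.neg ℤ)⁻¹ (-b) = b := by simp [hneg]
  rw [h1, h2]


/-! ### Counting orbits -/

noncomputable def qc (r : ℤ → ℤ → Prop) (S : Set ℤ) : ℕ :=
  Nat.card (Quot (fun a b : S => r a b))

lemma orbitCountOn_eq_qc (σ : Pz) (S : Set ℤ) :
    orbitCountOn σ S = qc σ.SameCycle S := rfl

lemma qc_congr {r r' : ℤ → ℤ → Prop} {S : Set ℤ}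
    (h : ∀ a b : S, r a b ↔ r' a b) : qc r S = qc r' S :=
  Nat.card_congr (Quot.congr (Equiv.refl _) (by simpa using h))

lemma qc_equiv {r r' : ℤ → ℤ → Prop} {S T : Set ℤ} (e : S ≃ T)
    (h : ∀ a b : S, r a b ↔ r' (e a) (e b)) : qc r S = qc r' T :=
  Nat.card_congr (Quot.congr e h)

lemma qc_const {r : ℤ → ℤ → Prop} {S : Set ℤ} (hne : S.Nonempty)
    (h : ∀ a b : S, r a b) : qc r S = 1 := by
  obtain ⟨x, hx⟩ := hne
  refine Nat.card_eq_one_iff_unique.mpr ⟨⟨?_⟩, ⟨Quot.mk _ ⟨x, hx⟩⟩⟩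
  rintro ⟨a⟩ ⟨b⟩
  exact Quot.sound (h a b)

lemma qc_le_ncard {r : ℤ → ℤ → Prop} {S : Set ℤ} (hfin : S.Finite) :
    qc r S ≤ Nat.card S := by
  have : Finite S := hfin
  exact Nat.card_le_card_of_surjective (Quot.mk _) Quot.exists_rep

lemma card_add_one_le_of_surj_noninj {α β : Type*} [Finite α] (f : α → β)
    (hf : Function.Surjective f) {a b : α} (hne : a ≠ b) (heq : f a = f b) :
    Nat.card β + 1 ≤ Nat.card α := by
  have : Finite β := Finite.of_surjective f hf
  classical
  set g := Function.surjInv hf with hg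
  have hginj : Function.Injective g := Function.injective_surjInv hf
  have hmiss : a ∉ Set.range g ∨ b ∉ Set.range g := by
    by_contra hcon
    push_neg at hcon
    obtain ⟨⟨y1, hy1⟩, ⟨y2, hy2⟩⟩ := hcon
    have e1 : f a = y1 := by rw [← hy1]; exact Function.surjInv_eq hf y1
    have e2 : f b = y2 := by rw [← hy2]; exact Function.surjInv_eq hf y2
    have : y1 = y2 := by rw [← e1, ← e2, heq]
    exact hne (by rw [← hy1, ← hy2, this])
  obtain ⟨c, hc⟩ : ∃ c, c ∉ Set.range g := by
    rcases hmiss with h | h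
    exacts [⟨a, h⟩, ⟨b, h⟩]
  have hinj : Function.Injective (fun o : Option β => o.elim c g) := by
    rintro (_ | y1) (_ | y2) h <;> simp only [Option.elim] at h
    · rfl
    · exact absurd ⟨y2, h.symm⟩ hc
    · exact absurd ⟨y1, h⟩ hc
    · rw [hginj h]
  have hle := Nat.card_le_card_of_injective _ hinj
  have hcard : Nat.card (Option β) = Nat.card β + 1 := by
    have hpu : Nat.card PUnit.{1} = 1 := Nat.card_unique
    rw [Nat.card_congr (Equiv.optionEquivSumPUnit β), Nat.card_sum, hpu]
  rw [hcard] at hle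
  exact hle

lemma qc_lt_of_rel {r : ℤ → ℤ → Prop} {S : Set ℤ} (hfin : S.Finite)
    {x y : ℤ} (hx : x ∈ S) (hy : y ∈ S) (hne : x ≠ y) (hr : r x y) :
    qc r S + 1 ≤ Nat.card S := by
  have : Finite S := hfin
  refine card_add_one_le_of_surj_noninj (Quot.mk _) Quot.exists_rep
    (a := ⟨x, hx⟩) (b := ⟨y, hy⟩) (by simpa using hne) (Quot.sound hr)

lemma qc_le_of_imp {r r' : ℤ → ℤ → Prop} {S : Set ℤ} (hfin : S.Finite)
    (h : ∀ a b : S, r a b → r' a b) : qc r' S ≤ qc r S := by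
  have : Finite S := hfin
  refine Nat.card_le_card_of_surjective
    (Quot.lift (fun a => Quot.mk _ a) (fun a b hab => Quot.sound (h a b hab))) ?_
  rintro ⟨a⟩
  exact ⟨Quot.mk _ a, rfl⟩

lemma qc_eq_ncard {S : Set ℤ} : qc (fun a b => a = b) S = Nat.card S := by
  refine Nat.card_congr ⟨Quot.lift id (fun a b h => by exact_mod_cast Subtype.ext h),
    Quot.mk _, ?_, ?_⟩
  · rintro ⟨a⟩; rfl
  · intro a; rfl

/-- disjoint union with no cross relation -/
lemma qc_union {r : ℤ → ℤ → Prop} {S1 S2 : Set ℤ} (hr : Equivalence r)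
    (hf1 : S1.Finite) (hf2 : S2.Finite)
    (hd : Disjoint S1 S2) (hx : ∀ a ∈ S1, ∀ b ∈ S2, ¬ r a b) :
    qc r (S1 ∪ S2) = qc r S1 + qc r S2 := by
  classical
  have : Finite S1 := hf1
  have : Finite S2 := hf2
  have incl1 : ∀ a : S1, (a : ℤ) ∈ S1 ∪ S2 := fun a => Or.inl a.2
  have incl2 : ∀ a : S2, (a : ℤ) ∈ S1 ∪ S2 := fun a => Or.inr a.2
  have memcase : ∀ a : (S1 ∪ S2 : Set ℤ), (a : ℤ) ∉ S1 → (a : ℤ) ∈ S2 := by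
    rintro ⟨a, ha | ha⟩ h
    · exact absurd ha h
    · exact ha
  let F : Quot (fun a b : (S1 ∪ S2 : Set ℤ) => r a b) →
      Quot (fun a b : S1 => r a b) ⊕ Quot (fun a b : S2 => r a b) :=
    Quot.lift (fun a =>
      if h : (a : ℤ) ∈ S1 then Sum.inl (Quot.mk _ ⟨a, h⟩)
      else Sum.inr (Quot.mk _ ⟨a, memcase a h⟩))
      (by
        intro a b hab
        by_cases ha : (a : ℤ) ∈ S1 <;> by_cases hb : (b : ℤ) ∈ S1
        · simp only [dif_pos ha, dif_pos hb]
          exact congrArg _ (Quot.sound hab)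
        · exact absurd hab (hx a ha b (memcase b hb))
        · exact absurd (hr.symm hab) (hx b hb a (memcase a ha))
        · simp only [dif_neg ha, dif_neg hb]
          exact congrArg _ (Quot.sound hab))
  let G : Quot (fun a b : S1 => r a b) ⊕ Quot (fun a b : S2 => r a b) →
      Quot (fun a b : (S1 ∪ S2 : Set ℤ) => r a b) :=
    Sum.elim
      (Quot.lift (fun a => Quot.mk _ ⟨a, incl1 a⟩) (fun a b hab => Quot.sound hab))
      (Quot.lift (fun a => Quot.mk _ ⟨a, incl2 a⟩) (fun a b hab => Quot.sound hab))
  have hGF : ∀ q, G (F q) = q := by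
    rintro ⟨a⟩
    by_cases ha : (a : ℤ) ∈ S1
    · show G (dite _ _ _) = _
      rw [dif_pos ha]; rfl
    · show G (dite _ _ _) = _
      rw [dif_neg ha]; rfl
  have hFG : ∀ q, F (G q) = q := by
    rintro (q | q)
    · induction q using Quot.ind with
      | _ a =>
        have key : F (Quot.mk _ ⟨(a:ℤ), incl1 a⟩) =
            (if h : ((a:ℤ)) ∈ S1 then Sum.inl (Quot.mk (fun a b : S1 => r a b) ⟨a, h⟩)
             else Sum.inr (Quot.mk (fun a b : S2 => r a b)
               ⟨a, memcase ⟨a, incl1 a⟩ h⟩)) := rfl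
        show F (Quot.mk _ ⟨(a:ℤ), incl1 a⟩) = Sum.inl (Quot.mk _ a)
        rw [key, dif_pos a.2]
    · induction q using Quot.ind with
      | _ a =>
        have hnot : ((a : ℤ)) ∉ S1 := fun h => (hd.le_bot ⟨h, a.2⟩ : _)
        have key : F (Quot.mk _ ⟨(a:ℤ), incl2 a⟩) =
            (if h : ((a:ℤ)) ∈ S1 then Sum.inl (Quot.mk (fun a b : S1 => r a b) ⟨a, h⟩)
             else Sum.inr (Quot.mk (fun a b : S2 => r a b)
               ⟨a, memcase ⟨a, incl2 a⟩ h⟩)) := rfl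
        show F (Quot.mk _ ⟨(a:ℤ), incl2 a⟩) = Sum.inr (Quot.mk _ a)
        rw [key, dif_neg hnot]
  rw [qc, Nat.card_congr ⟨F, G, hGF, hFG⟩, Nat.card_sum]
  rfl
/-! ### Joining two classes of an equivalence relation -/

def pj (r : ℤ → ℤ → Prop) (x y : ℤ) (a b : ℤ) : Prop :=
  r a b ∨ (r a x ∧ r y b) ∨ (r a y ∧ r x b)

lemma pj_of_rel {r : ℤ → ℤ → Prop} {x y a b : ℤ} (h : r a b) : pj r x y a b := Or.inl h

lemma pj_pair {r : ℤ → ℤ → Prop} (hr : Equivalence r) (x y : ℤ) : pj r x y x y :=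
  Or.inr (Or.inl ⟨hr.refl x, hr.refl y⟩)

lemma pj_equivalence {r : ℤ → ℤ → Prop} (hr : Equivalence r) (x y : ℤ) :
    Equivalence (pj r x y) := by
  constructor
  · exact fun a => Or.inl (hr.refl a)
  · rintro a b (h | ⟨h1, h2⟩ | ⟨h1, h2⟩)
    · exact Or.inl (hr.symm h)
    · exact Or.inr (Or.inr ⟨hr.symm h2, hr.symm h1⟩)
    · exact Or.inr (Or.inl ⟨hr.symm h2, hr.symm h1⟩)
  · rintro a b c (h | ⟨h1, h2⟩ | ⟨h1, h2⟩) (h' | ⟨h1', h2'⟩ | ⟨h1', h2'⟩)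
    · exact Or.inl (hr.trans h h')
    · exact Or.inr (Or.inl ⟨hr.trans h h1', h2'⟩)
    · exact Or.inr (Or.inr ⟨hr.trans h h1', h2'⟩)
    · exact Or.inr (Or.inl ⟨h1, hr.trans h2 h'⟩)
    · exact Or.inl (hr.trans h1 (hr.trans (hr.symm (hr.trans h2 h1')) h2'))
    · exact Or.inl (hr.trans h1 h2')
    · exact Or.inr (Or.inr ⟨h1, hr.trans h2 h'⟩)
    · exact Or.inl (hr.trans h1 h2')
    · exact Or.inl (hr.trans h1 (hr.trans (hr.symm (hr.trans h2 h1')) h2'))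

lemma pj_of_already {r : ℤ → ℤ → Prop} (hr : Equivalence r) {x y : ℤ} (hxy : r x y)
    (a b : ℤ) : pj r x y a b ↔ r a b := by
  constructor
  · rintro (h | ⟨h1, h2⟩ | ⟨h1, h2⟩)
    · exact h
    · exact hr.trans (hr.trans h1 hxy) h2
    · exact hr.trans (hr.trans h1 (hr.symm hxy)) h2
  · exact Or.inl

/-- collapsing two distinct classes: exact count. -/
lemma qc_pj {r : ℤ → ℤ → Prop} (hr : Equivalence r) {S : Set ℤ} (hfin : S.Finite)
    {x y : ℤ} (hx : x ∈ S) (hy : y ∈ S) (hnr : ¬ r x y) :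
    qc r S = qc (pj r x y) S + 1 := by
  classical
  have : Finite S := hfin
  let F : Quot (fun a b : S => r a b) → (Quot (fun a b : S => pj r x y a b)) ⊕ Unit :=
    Quot.lift (fun a => if r a y then Sum.inr () else Sum.inl (Quot.mk _ a))
      (by
        intro a b hab
        by_cases hay : r (a : ℤ) y
        · rw [if_pos hay, if_pos (hr.trans (hr.symm hab) hay)]
        · rw [if_neg hay, if_neg (fun hby => hay (hr.trans hab hby))]
          exact congrArg _ (Quot.sound (Or.inl hab)))
  let G : (Quot (fun a b : S => pj r x y a b)) ⊕ Unit → Quot (fun a b : S => r a b) :=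
    Sum.elim
      (Quot.lift (fun a => if r a y then Quot.mk _ (⟨x, hx⟩ : S) else Quot.mk _ a)
        (by
          intro a b hab
          rcases hab with h | ⟨h1, h2⟩ | ⟨h1, h2⟩
          · by_cases hay : r (a : ℤ) y
            · rw [if_pos hay, if_pos (hr.trans (hr.symm h) hay)]
            · rw [if_neg hay, if_neg (fun hby => hay (hr.trans h hby))]
              exact Quot.sound h
          · have hay : ¬ r (a : ℤ) y := fun hy' => hnr (hr.trans (hr.symm h1) hy')
            have hby : r (b : ℤ) y := hr.symm h2
            rw [if_neg hay, if_pos hby]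
            exact Quot.sound h1
          · have hay : r (a : ℤ) y := h1
            have hby : ¬ r (b : ℤ) y := fun hy' => hnr (hr.trans h2 hy')
            rw [if_pos hay, if_neg hby]
            exact Quot.sound h2))
      (fun _ => Quot.mk _ (⟨y, hy⟩ : S))
  have hGF : ∀ q, G (F q) = q := by
    rintro ⟨a⟩
    by_cases hay : r (a : ℤ) y
    · have key : F (Quot.mk _ a) = Sum.inr () := by
        show (if r (a:ℤ) y then Sum.inr () else Sum.inl (Quot.mk _ a)) = _
        rw [if_pos hay]
      rw [key]
      exact Quot.sound (hr.symm hay)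
    · have key : F (Quot.mk _ a) = Sum.inl (Quot.mk _ a) := by
        show (if r (a:ℤ) y then Sum.inr () else Sum.inl (Quot.mk _ a)) = _
        rw [if_neg hay]
      rw [key]
      show (if r (a:ℤ) y then Quot.mk _ (⟨x, hx⟩ : S) else Quot.mk _ a) = _
      rw [if_neg hay]
  have hFG : ∀ q, F (G q) = q := by
    rintro (q | ⟨⟩)
    · induction q using Quot.ind with
      | _ a =>
        by_cases hay : r (a : ℤ) y
        · have key : G (Sum.inl (Quot.mk _ a)) = Quot.mk _ (⟨x, hx⟩ : S) := by
            show (if r (a:ℤ) y then Quot.mk _ (⟨x, hx⟩ : S) else Quot.mk _ a) = _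
            rw [if_pos hay]
          rw [key]
          have key2 : F (Quot.mk _ (⟨x, hx⟩ : S)) = Sum.inl (Quot.mk _ (⟨x, hx⟩ : S)) := by
            show (if r x y then Sum.inr () else Sum.inl (Quot.mk _ _)) = _
            rw [if_neg hnr]
          rw [key2]
          exact congrArg _ (Quot.sound (Or.inr (Or.inl ⟨hr.refl x, hr.symm hay⟩)))
        · have key : G (Sum.inl (Quot.mk _ a)) = Quot.mk _ a := by
            show (if r (a:ℤ) y then Quot.mk _ (⟨x, hx⟩ : S) else Quot.mk _ a) = _
            rw [if_neg hay]
          rw [key]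
          show (if r (a:ℤ) y then Sum.inr () else Sum.inl (Quot.mk _ a)) = _
          rw [if_neg hay]
    · show F (Quot.mk _ (⟨y, hy⟩ : S)) = Sum.inr ()
      show (if r y y then Sum.inr () else Sum.inl (Quot.mk _ _)) = _
      rw [if_pos (hr.refl y)]
  have := Nat.card_congr (⟨F, G, hGF, hFG⟩ :
    Quot (fun a b : S => r a b) ≃ (Quot (fun a b : S => pj r x y a b)) ⊕ Unit)
  have hu : Nat.card Unit = 1 := Nat.card_unique
  rw [qc, qc, this, Nat.card_sum, hu]

/-! ### Effect of a transposition on cycle counts -/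

lemma sc_equiv (σ : Pz) : Equivalence σ.SameCycle :=
  ⟨fun a => Equiv.Perm.SameCycle.refl σ a, fun h => h.symm, fun h h' => h.trans h'⟩

lemma FixOut.swap_mul {σ : Pz} {S : Set ℤ} (h : FixOut σ S) {x y : ℤ}
    (hx : x ∈ S) (hy : y ∈ S) : FixOut (Equiv.swap x y * σ) S := by
  intro z hz
  have h1 : σ z = z := h z hz
  have h2 : z ≠ x := fun e => hz (e ▸ hx)
  have h3 : z ≠ y := fun e => hz (e ▸ hy)
  rw [Equiv.Perm.mul_apply, h1, Equiv.swap_apply_of_ne_of_ne h2 h3]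

lemma sameCycle_swap_mul_of_not {σ : Pz} {S : Set ℤ} (hfin : S.Finite)
    (hfix : FixOut σ S) {x y : ℤ} (hxy : x ≠ y) (hns : ¬ σ.SameCycle x y) :
    (Equiv.swap x y * σ).SameCycle x y := by
  obtain ⟨m₀, hm₀, hp₀⟩ := exists_period hfin hfix x
  classical
  have hex : ∃ m, 0 < m ∧ (σ ^ m) x = x := ⟨m₀, hm₀, hp₀⟩
  set m := Nat.find hex with hmdef
  obtain ⟨hmpos, hmp⟩ : 0 < m ∧ (σ ^ m) x = x := Nat.find_spec hex
  have hmin : ∀ j, 0 < j → j < m → (σ ^ j) x ≠ x := by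
    intro j hj hjm hεq
    exact Nat.find_min hex hjm ⟨hj, hεq⟩
  set τ := Equiv.swap x y * σ with hτ
  have key : ∀ j, j < m → (τ ^ j) x = (σ ^ j) x := by
    intro j
    induction j with
    | zero => intro _; simp
    | succ n ih =>
        intro hn
        have hn' : n < m := by omega
        have hne1 : (σ ^ (n+1)) x ≠ x := hmin (n+1) (by omega) hn
        have hne2 : (σ ^ (n+1)) x ≠ y := fun e => hns ⟨(n+1 : ℕ), by exact_mod_cast e⟩
        rw [pow_succ', Equiv.Perm.mul_apply, ih hn', hτ, Equiv.Perm.mul_apply,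
          ← Equiv.Perm.mul_apply σ, ← pow_succ']
        exact Equiv.swap_apply_of_ne_of_ne hne1 hne2
  have hfin2 : (τ ^ m) x = y := by
    have hm1 : m = (m - 1) + 1 := by omega
    rw [hm1, pow_succ', Equiv.Perm.mul_apply, key (m-1) (by omega), hτ,
      Equiv.Perm.mul_apply, ← Equiv.Perm.mul_apply σ, ← pow_succ', ← hm1, hmp]
    exact Equiv.swap_apply_left x y
  exact ⟨(m : ℤ), by exact_mod_cast hfin2⟩

lemma not_sameCycle_swap_mul_of_same {σ : Pz} {S : Set ℤ} (hfin : S.Finite)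
    (hfix : FixOut σ S) {x y : ℤ} (hxy : x ≠ y) (hs : σ.SameCycle x y) :
    ¬ (Equiv.swap x y * σ).SameCycle x y := by
  classical
  obtain ⟨k, hk⟩ := (sameCycle_iff_pow hfin hfix).mp hs
  have hex : ∃ j, 0 < j ∧ (σ ^ j) x = y := by
    refine ⟨k, ?_, hk⟩
    rcases Nat.eq_zero_or_pos k with h | h
    · exact absurd (by simpa [h] using hk) hxy
    · exact h
  set m := Nat.find hex with hmdef
  obtain ⟨hmpos, hmp⟩ : 0 < m ∧ (σ ^ m) x = y := Nat.find_spec hex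
  have hminy : ∀ j, 0 < j → j < m → (σ ^ j) x ≠ y := by
    intro j hj hjm heq
    exact Nat.find_min hex hjm ⟨hj, heq⟩
  have hminx : ∀ j, 0 < j → j < m → (σ ^ j) x ≠ x := by
    intro j hj hjm heq
    have : (σ ^ (m - j)) x = y := by
      have : (σ ^ (m - j)) ((σ ^ j) x) = y := by
        rw [← Equiv.Perm.mul_apply, ← pow_add, Nat.sub_add_cancel (le_of_lt hjm)]
        exact hmp
      rwa [heq] at this
    exact hminy (m - j) (by omega) (by omega) this
  set τ := Equiv.swap x y * σ with hτ
  have key : ∀ j, j < m → (τ ^ j) x = (σ ^ j) x := by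
    intro j
    induction j with
    | zero => intro _; simp
    | succ n ih =>
        intro hn
        have hn' : n < m := by omega
        have hne1 : (σ ^ (n+1)) x ≠ x := hminx (n+1) (by omega) hn
        have hne2 : (σ ^ (n+1)) x ≠ y := hminy (n+1) (by omega) hn
        rw [pow_succ', Equiv.Perm.mul_apply, ih hn', hτ, Equiv.Perm.mul_apply,
          ← Equiv.Perm.mul_apply σ, ← pow_succ']
        exact Equiv.swap_apply_of_ne_of_ne hne1 hne2
  have hper : (τ ^ m) x = x := by
    have hm1 : m = (m - 1) + 1 := by omega
    rw [hm1, pow_succ', Equiv.Perm.mul_apply, key (m-1) (by omega), hτ,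
      Equiv.Perm.mul_apply, ← Equiv.Perm.mul_apply σ, ← pow_succ', ← hm1, hmp]
    exact Equiv.swap_apply_right x y
  rintro ⟨i, hi⟩
  obtain ⟨r, hrm, hr⟩ := zpow_apply_of_period hmpos hper i
  rw [hr] at hi
  rcases Nat.eq_zero_or_pos r with h0 | h0
  · exact hxy (by simpa [h0] using hi)
  · rw [key r hrm] at hi
    exact hminy r h0 hrm hi

lemma sameCycle_swap_mul_pj {σ : Pz} {S : Set ℤ} (hfin : S.Finite)
    (hfix : FixOut σ S) {x y : ℤ} (hx : x ∈ S) (hy : y ∈ S) {a b : ℤ}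
    (h : (Equiv.swap x y * σ).SameCycle a b) : pj σ.SameCycle x y a b := by
  set τ := Equiv.swap x y * σ with hτ
  have hfixτ : FixOut τ S := hfix.swap_mul hx hy
  obtain ⟨k, hk⟩ := (sameCycle_iff_pow hfin hfixτ).mp h
  subst hk
  clear h
  have hpje := pj_equivalence (sc_equiv σ) x y
  induction k with
  | zero => exact hpje.refl a
  | succ n ih =>
      refine hpje.trans ih ?_
      set c := (τ ^ n) a with hc
      show pj σ.SameCycle x y c ((τ ^ (n+1)) a)
      have hstep : (τ ^ (n+1)) a = Equiv.swap x y (σ c) := by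
        rw [pow_succ', Equiv.Perm.mul_apply, ← hc, hτ, Equiv.Perm.mul_apply]
      by_cases h1 : σ c = x
      · have : (τ ^ (n+1)) a = y := by rw [hstep, h1, Equiv.swap_apply_left]
        rw [this]
        exact Or.inr (Or.inl ⟨⟨1, by simpa using h1⟩, (sc_equiv σ).refl y⟩)
      · by_cases h2 : σ c = y
        · have : (τ ^ (n+1)) a = x := by rw [hstep, h2, Equiv.swap_apply_right]
          rw [this]
          exact Or.inr (Or.inr ⟨⟨1, by simpa using h2⟩, (sc_equiv σ).refl x⟩)
        · have : (τ ^ (n+1)) a = σ c := by rw [hstep, Equiv.swap_apply_of_ne_of_ne h1 h2]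
          rw [this]
          exact Or.inl ⟨1, by simp⟩

lemma sameCycle_pj_swap_mul {σ : Pz} {S : Set ℤ} (hfin : S.Finite)
    (hfix : FixOut σ S) {x y : ℤ} (hx : x ∈ S) (hy : y ∈ S) {a b : ℤ}
    (h : σ.SameCycle a b) : pj (Equiv.swap x y * σ).SameCycle x y a b := by
  have hσ : Equiv.swap x y * (Equiv.swap x y * σ) = σ := by
    rw [← mul_assoc, Equiv.swap_mul_self, one_mul]
  refine sameCycle_swap_mul_pj hfin (hfix.swap_mul hx hy) hx hy ?_
  rw [hσ]; exact h

/-- The two exact transposition-count lemmas. -/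
lemma qc_swap_mul_of_same {σ : Pz} {S : Set ℤ} (hfin : S.Finite)
    (hfix : FixOut σ S) {x y : ℤ} (hx : x ∈ S) (hy : y ∈ S) (hxy : x ≠ y)
    (hs : σ.SameCycle x y) :
    qc (Equiv.swap x y * σ).SameCycle S = qc σ.SameCycle S + 1 := by
  set τ := Equiv.swap x y * σ with hτ
  have hJ : ∀ a b : S, pj σ.SameCycle x y (a:ℤ) b ↔ pj τ.SameCycle x y (a:ℤ) b := by
    have e1 := pj_equivalence (sc_equiv σ) x y
    have e2 := pj_equivalence (sc_equiv τ) x y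
    intro a b
    constructor
    · rintro (h | ⟨h1, h2⟩ | ⟨h1, h2⟩)
      · exact sameCycle_pj_swap_mul hfin hfix hx hy h
      · exact e2.trans (sameCycle_pj_swap_mul hfin hfix hx hy h1)
          (e2.trans (pj_pair (sc_equiv τ) x y) (sameCycle_pj_swap_mul hfin hfix hx hy h2))
      · exact e2.trans (sameCycle_pj_swap_mul hfin hfix hx hy h1)
          (e2.trans (e2.symm (pj_pair (sc_equiv τ) x y))
            (sameCycle_pj_swap_mul hfin hfix hx hy h2))
    · rintro (h | ⟨h1, h2⟩ | ⟨h1, h2⟩)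
      · exact sameCycle_swap_mul_pj hfin hfix hx hy h
      · exact e1.trans (sameCycle_swap_mul_pj hfin hfix hx hy h1)
          (e1.trans (pj_pair (sc_equiv σ) x y) (sameCycle_swap_mul_pj hfin hfix hx hy h2))
      · exact e1.trans (sameCycle_swap_mul_pj hfin hfix hx hy h1)
          (e1.trans (e1.symm (pj_pair (sc_equiv σ) x y))
            (sameCycle_swap_mul_pj hfin hfix hx hy h2))
  have hJeq : qc (pj σ.SameCycle x y) S = qc (pj τ.SameCycle x y) S := qc_congr hJ
  have h1 : qc (pj σ.SameCycle x y) S = qc σ.SameCycle S :=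
    qc_congr (fun a b => pj_of_already (sc_equiv σ) hs _ _)
  have hnτ : ¬ τ.SameCycle x y := not_sameCycle_swap_mul_of_same hfin hfix hxy hs
  have h2 : qc τ.SameCycle S = qc (pj τ.SameCycle x y) S + 1 :=
    qc_pj (sc_equiv τ) hfin hx hy hnτ
  omega

lemma qc_swap_mul_of_not {σ : Pz} {S : Set ℤ} (hfin : S.Finite)
    (hfix : FixOut σ S) {x y : ℤ} (hx : x ∈ S) (hy : y ∈ S) (hxy : x ≠ y)
    (hns : ¬ σ.SameCycle x y) :
    qc σ.SameCycle S = qc (Equiv.swap x y * σ).SameCycle S + 1 := by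
  set τ := Equiv.swap x y * σ with hτ
  have hσ : Equiv.swap x y * τ = σ := by
    rw [hτ, ← mul_assoc, Equiv.swap_mul_self, one_mul]
  have hfixτ : FixOut τ S := hfix.swap_mul hx hy
  have hsτ : τ.SameCycle x y := sameCycle_swap_mul_of_not hfin hfix hxy hns
  have := qc_swap_mul_of_same hfin hfixτ hx hy hxy hsτ
  rwa [hσ] at this

/-! ### The joint orbit relation and the genus bound -/

def JStep (α β : Pz) (u v : ℤ) : Prop := α u = v ∨ β u = v

def JRel (α β : Pz) : ℤ → ℤ → Prop := Relation.EqvGen (JStep α β)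

lemma jrel_equiv (α β : Pz) : Equivalence (JRel α β) :=
  Relation.EqvGen.is_equivalence _

lemma jrel_apply_left (α β : Pz) (u : ℤ) : JRel α β u (α u) :=
  Relation.EqvGen.rel _ _ (Or.inl rfl)

lemma jrel_apply_right (α β : Pz) (u : ℤ) : JRel α β u (β u) :=
  Relation.EqvGen.rel _ _ (Or.inr rfl)

/-- closure of an equivalence under perm application gives same-cycle inclusion -/
lemma sameCycle_subset_of_closed {σ : Pz} {S : Set ℤ} (hfin : S.Finite)
    (hfix : FixOut σ S) {R : ℤ → ℤ → Prop} (hR : Equivalence R)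
    (hstep : ∀ u, R u (σ u)) {a b : ℤ} (h : σ.SameCycle a b) : R a b := by
  obtain ⟨k, hk⟩ := (sameCycle_iff_pow hfin hfix).mp h
  subst hk
  clear h
  induction k with
  | zero => exact hR.refl a
  | succ n ih =>
      refine hR.trans ih ?_
      rw [pow_succ', Equiv.Perm.mul_apply]
      exact hstep _

lemma jrel_of_sameCycle_left {α β : Pz} {S : Set ℤ} (hfin : S.Finite)
    (hfix : FixOut α S) {a b : ℤ} (h : α.SameCycle a b) : JRel α β a b :=
  sameCycle_subset_of_closed hfin hfix (jrel_equiv α β) (jrel_apply_left α β) h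

lemma jrel_of_sameCycle_right {α β : Pz} {S : Set ℤ} (hfin : S.Finite)
    (hfix : FixOut β S) {a b : ℤ} (h : β.SameCycle a b) : JRel α β a b :=
  sameCycle_subset_of_closed hfin hfix (jrel_equiv α β) (jrel_apply_right α β) h

lemma jrel_one {α : Pz} {S : Set ℤ} (hfin : S.Finite) (hfix : FixOut α S) (a b : ℤ) :
    JRel α 1 a b ↔ α.SameCycle a b := by
  constructor
  · intro h
    induction h with
    | rel u v huv =>
        rcases huv with h | h
        · exact ⟨1, by simpa using h⟩
        · simp only [Equiv.Perm.one_apply] at h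
          exact h ▸ Equiv.Perm.SameCycle.refl α u
    | refl u => exact Equiv.Perm.SameCycle.refl α u
    | symm u v _ ih => exact ih.symm
    | trans u v w _ _ ih1 ih2 => exact ih1.trans ih2
  · exact jrel_of_sameCycle_left hfin hfix

lemma FixOut.mul {σ τ : Pz} {S : Set ℤ} (h1 : FixOut σ S) (h2 : FixOut τ S) :
    FixOut (σ * τ) S := fun z hz => by
  rw [Equiv.Perm.mul_apply, h2 z hz, h1 z hz]

lemma FixOut.swap {S : Set ℤ} {x y : ℤ} (hx : x ∈ S) (hy : y ∈ S) :
    FixOut (Equiv.swap x y) S := fun z hz =>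
  Equiv.swap_apply_of_ne_of_ne (fun e => hz (e ▸ hx)) (fun e => hz (e ▸ hy))

lemma qc_inv {σ : Pz} {S : Set ℤ} : qc σ⁻¹.SameCycle S = qc σ.SameCycle S :=
  qc_congr (fun a b => Equiv.Perm.sameCycle_inv)

/-- mutual inclusion of the pair-joined joint relations after a transposition move -/
lemma jrel_swap_pj {α β : Pz} {x y : ℤ} :
    (∀ a b, JRel (α * Equiv.swap x y) (Equiv.swap x y * β) a b → pj (JRel α β) x y a b) ∧
    (∀ a b, JRel α β a b → pj (JRel (α * Equiv.swap x y) (Equiv.swap x y * β)) x y a b) := by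
  classical
  set t := Equiv.swap x y with ht
  set α' := α * t with hα'
  set β' := t * β with hβ'
  have e1 := pj_equivalence (jrel_equiv α β) x y
  have e2 := pj_equivalence (jrel_equiv α' β') x y
  have htx : t x = y := Equiv.swap_apply_left x y
  have hty : t y = x := Equiv.swap_apply_right x y
  have hα'app : ∀ z, α' z = α (t z) := fun z => by rw [hα', Equiv.Perm.mul_apply]
  have hβ'app : ∀ z, β' z = t (β z) := fun z => by rw [hβ', Equiv.Perm.mul_apply]
  have hαapp : ∀ z, α z = α' (t z) := fun z => by
    rw [hα'app, ht, Equiv.swap_apply_self]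
  have hβapp : ∀ z, β z = t (β' z) := fun z => by
    rw [hβ'app, ht, Equiv.swap_apply_self]
  constructor
  · intro a b h
    induction h with
    | rel u v huv =>
        rcases huv with h | h
        · subst h
          rw [hα'app]
          by_cases hux : u = x
          · rw [hux, htx]
            exact e1.trans (pj_pair (jrel_equiv α β) x y) (pj_of_rel (jrel_apply_left α β y))
          · by_cases huy : u = y
            · rw [huy, hty]
              exact e1.trans (e1.symm (pj_pair (jrel_equiv α β) x y))
                (pj_of_rel (jrel_apply_left α β x))
            · rw [ht, Equiv.swap_apply_of_ne_of_ne hux huy]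
              exact pj_of_rel (jrel_apply_left α β u)
        · subst h
          rw [hβ'app]
          by_cases hbx : β u = x
          · rw [hbx, htx]
            refine e1.trans (pj_of_rel ?_) (pj_pair (jrel_equiv α β) x y)
            rw [← hbx]
            exact jrel_apply_right α β u
          · by_cases hby : β u = y
            · rw [hby, hty]
              refine e1.trans (pj_of_rel ?_) (e1.symm (pj_pair (jrel_equiv α β) x y))
              rw [← hby]
              exact jrel_apply_right α β u
            · rw [ht, Equiv.swap_apply_of_ne_of_ne hbx hby]
              exact pj_of_rel (jrel_apply_right α β u)
    | refl u => exact e1.refl u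
    | symm u v _ ih => exact e1.symm ih
    | trans u v w _ _ ih1 ih2 => exact e1.trans ih1 ih2
  · intro a b h
    induction h with
    | rel u v huv =>
        rcases huv with h | h
        · subst h
          rw [hαapp]
          by_cases hux : u = x
          · rw [hux, htx]
            exact e2.trans (pj_pair (jrel_equiv α' β') x y) (pj_of_rel (jrel_apply_left α' β' y))
          · by_cases huy : u = y
            · rw [huy, hty]
              exact e2.trans (e2.symm (pj_pair (jrel_equiv α' β') x y))
                (pj_of_rel (jrel_apply_left α' β' x))
            · rw [ht, Equiv.swap_apply_of_ne_of_ne hux huy]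
              exact pj_of_rel (jrel_apply_left α' β' u)
        · subst h
          rw [hβapp]
          by_cases hbx : β' u = x
          · rw [hbx, htx]
            refine e2.trans (pj_of_rel ?_) (pj_pair (jrel_equiv α' β') x y)
            rw [← hbx]
            exact jrel_apply_right α' β' u
          · by_cases hby : β' u = y
            · rw [hby, hty]
              refine e2.trans (pj_of_rel ?_) (e2.symm (pj_pair (jrel_equiv α' β') x y))
              rw [← hby]
              exact jrel_apply_right α' β' u
            · rw [ht, Equiv.swap_apply_of_ne_of_ne hbx hby]
              exact pj_of_rel (jrel_apply_right α' β' u)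
    | refl u => exact e2.refl u
    | symm u v _ ih => exact e2.symm ih
    | trans u v w _ _ ih1 ih2 => exact e2.trans ih1 ih2

lemma qc_pj_le {r : ℤ → ℤ → Prop} (hr : Equivalence r) {S : Set ℤ} (hfin : S.Finite)
    {x y : ℤ} (hx : x ∈ S) (hy : y ∈ S) :
    qc (pj r x y) S ≤ qc r S ∧ qc r S ≤ qc (pj r x y) S + 1 := by
  by_cases h : r x y
  · have heq : qc (pj r x y) S = qc r S :=
      qc_congr (fun a b => pj_of_already hr h _ _)
    omega
  · have heq : qc r S = qc (pj r x y) S + 1 := qc_pj hr hfin hx hy h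
    omega

lemma genus_base {S : Set ℤ} (hfin : S.Finite) (α β : Pz) (hα : FixOut α S)
    (hβ : FixOut β S) (hcard : Nat.card S ≤ qc β.SameCycle S) :
    qc α.SameCycle S + qc β.SameCycle S + qc (α * β).SameCycle S
      ≤ Nat.card S + 2 * qc (JRel α β) S := by
  have hb1 : ∀ z ∈ S, β z = z := by
    intro z hz
    by_contra hne
    have h1 : β.SameCycle z (β z) := ⟨1, by simp⟩
    have h2 := qc_lt_of_rel hfin hz (hβ.mem hz) (fun e => hne e.symm) h1
    have h3 := qc_le_ncard (r := β.SameCycle) hfin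
    omega
  have hβ1 : β = 1 := by
    apply Equiv.ext
    intro z
    by_cases hz : z ∈ S
    · simpa using hb1 z hz
    · simpa using hβ z hz
  subst hβ1
  have hq1 : qc (1 : Pz).SameCycle S = Nat.card S := by
    have : qc (1 : Pz).SameCycle S = qc (fun a b : ℤ => a = b) S :=
      qc_congr (fun a b => Equiv.Perm.sameCycle_one)
    rw [this, qc_eq_ncard]
  have hjr : qc (JRel α 1) S = qc α.SameCycle S :=
    qc_congr (fun a b => jrel_one hfin hα a b)
  rw [mul_one α, hq1, hjr]
  omega

lemma genus_bound {S : Set ℤ} (hfin : S.Finite) (α β : Pz) (hα : FixOut α S)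
    (hβ : FixOut β S) :
    qc α.SameCycle S + qc β.SameCycle S + qc (α * β).SameCycle S
      ≤ Nat.card S + 2 * qc (JRel α β) S := by
  classical
  have key : ∀ n : ℕ, ∀ α β : Pz, FixOut α S → FixOut β S →
      Nat.card S - qc β.SameCycle S ≤ n →
      qc α.SameCycle S + qc β.SameCycle S + qc (α * β).SameCycle S
        ≤ Nat.card S + 2 * qc (JRel α β) S := by
    intro n
    induction n with
    | zero =>
        intro α β hα hβ hn
        exact genus_base hfin α β hα hβ (by omega)
    | succ n ih =>
        intro α β hα hβ hn
        by_cases hbase : Nat.card S ≤ qc β.SameCycle S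
        · exact genus_base hfin α β hα hβ hbase
        · have hmov : ∃ b ∈ S, β b ≠ b := by
            by_contra hno
            push_neg at hno
            have hβ1 : β = 1 := by
              apply Equiv.ext
              intro z
              by_cases hz : z ∈ S
              · simpa using hno z hz
              · simpa using hβ z hz
            apply hbase
            subst hβ1
            have : qc (1 : Pz).SameCycle S = qc (fun a b : ℤ => a = b) S :=
              qc_congr (fun a b => Equiv.Perm.sameCycle_one)
            rw [this, qc_eq_ncard]
          obtain ⟨b, hbS, hbne⟩ := hmov
          have hyS : β b ∈ S := hβ.mem hbS
          have hxy : b ≠ β b := fun e => hbne e.symm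
          have hfixt : FixOut (Equiv.swap b (β b)) S := FixOut.swap hbS hyS
          have hα' : FixOut (α * Equiv.swap b (β b)) S := hα.mul hfixt
          have hβ' : FixOut (Equiv.swap b (β b) * β) S := hfixt.mul hβ
          have hprod : (α * Equiv.swap b (β b)) * (Equiv.swap b (β b) * β) = α * β := by
            rw [mul_assoc, ← mul_assoc (Equiv.swap b (β b)), Equiv.swap_mul_self, one_mul]
          have hscβ : β.SameCycle b (β b) := ⟨1, by simp⟩
          have hqβ' : qc (Equiv.swap b (β b) * β).SameCycle S = qc β.SameCycle S + 1 :=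
            qc_swap_mul_of_same hfin hβ hbS hyS hxy hscβ
          have hβ'le : qc (Equiv.swap b (β b) * β).SameCycle S ≤ Nat.card S :=
            qc_le_ncard hfin
          have hmeas : Nat.card S - qc (Equiv.swap b (β b) * β).SameCycle S ≤ n := by omega
          have IH := ih (α * Equiv.swap b (β b)) (Equiv.swap b (β b) * β) hα' hβ' hmeas
          rw [hprod] at IH
          have hpj := jrel_swap_pj (α := α) (β := β) (x := b) (y := β b)
          have e1 := pj_equivalence (jrel_equiv α β) b (β b)
          have e2 := pj_equivalence
            (jrel_equiv (α * Equiv.swap b (β b)) (Equiv.swap b (β b) * β)) b (β b)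
          have hq12 : ∀ u v : (S : Set ℤ), pj (JRel α β) b (β b) (u:ℤ) v ↔
              pj (JRel (α * Equiv.swap b (β b)) (Equiv.swap b (β b) * β)) b (β b) (u:ℤ) v := by
            intro u v
            constructor
            · rintro (h | ⟨h1, h2⟩ | ⟨h1, h2⟩)
              · exact hpj.2 _ _ h
              · exact e2.trans (hpj.2 _ _ h1) (e2.trans
                  (pj_pair (jrel_equiv _ _) _ _) (hpj.2 _ _ h2))
              · exact e2.trans (hpj.2 _ _ h1) (e2.trans
                  (e2.symm (pj_pair (jrel_equiv _ _) _ _)) (hpj.2 _ _ h2))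
            · rintro (h | ⟨h1, h2⟩ | ⟨h1, h2⟩)
              · exact hpj.1 _ _ h
              · exact e1.trans (hpj.1 _ _ h1) (e1.trans
                  (pj_pair (jrel_equiv _ _) _ _) (hpj.1 _ _ h2))
              · exact e1.trans (hpj.1 _ _ h1) (e1.trans
                  (e1.symm (pj_pair (jrel_equiv _ _) _ _)) (hpj.1 _ _ h2))
          have hpeq : qc (pj (JRel α β) b (β b)) S =
              qc (pj (JRel (α * Equiv.swap b (β b)) (Equiv.swap b (β b) * β)) b (β b)) S :=
            qc_congr hq12
          obtain ⟨h1a, h1b⟩ := qc_pj_le (jrel_equiv α β) hfin hbS hyS (x := b) (y := β b)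
          obtain ⟨h2a, h2b⟩ := qc_pj_le
            (jrel_equiv (α * Equiv.swap b (β b)) (Equiv.swap b (β b) * β)) hfin hbS hyS
            (x := b) (y := β b)
          have hfixαinv : FixOut α⁻¹ S := hα.inv
          have hα'inv : (α * Equiv.swap b (β b))⁻¹ = Equiv.swap b (β b) * α⁻¹ := by
            rw [mul_inv_rev, Equiv.swap_inv]
          have hqα'inv : qc (α * Equiv.swap b (β b)).SameCycle S =
              qc (Equiv.swap b (β b) * α⁻¹).SameCycle S := by
            rw [← qc_inv (σ := α * Equiv.swap b (β b)), hα'inv]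
          rcases Classical.em (α⁻¹.SameCycle b (β b)) with hsc | hsc
          · have hstep : qc (Equiv.swap b (β b) * α⁻¹).SameCycle S =
                qc α⁻¹.SameCycle S + 1 :=
              qc_swap_mul_of_same hfin hfixαinv hbS hyS hxy hsc
            have hqα' : qc (α * Equiv.swap b (β b)).SameCycle S =
                qc α.SameCycle S + 1 := by
              rw [hqα'inv, hstep, qc_inv]
            omega
          · have hstep : qc α⁻¹.SameCycle S =
                qc (Equiv.swap b (β b) * α⁻¹).SameCycle S + 1 :=
              qc_swap_mul_of_not hfin hfixαinv hbS hyS hxy hsc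
            have hqα : qc α.SameCycle S =
                qc (α * Equiv.swap b (β b)).SameCycle S + 1 := by
              rw [← qc_inv (σ := α), hstep, ← hqα'inv]
            have hscα' : (α * Equiv.swap b (β b)).SameCycle b (β b) := by
              have h3 : (Equiv.swap b (β b) * α⁻¹).SameCycle b (β b) :=
                sameCycle_swap_mul_of_not hfin hfixαinv hxy hsc
              rw [← hα'inv] at h3
              exact Equiv.Perm.sameCycle_inv.mp h3
            have hjr' : JRel (α * Equiv.swap b (β b)) (Equiv.swap b (β b) * β) b (β b) :=
              jrel_of_sameCycle_left hfin hα' hscα'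
            have hpj2eq : qc (pj (JRel (α * Equiv.swap b (β b))
                (Equiv.swap b (β b) * β)) b (β b)) S =
                qc (JRel (α * Equiv.swap b (β b)) (Equiv.swap b (β b) * β)) S :=
              qc_congr (fun a b'' => pj_of_already (jrel_equiv (α * Equiv.swap b (β b)) (Equiv.swap b (β b) * β)) hjr' _ _)
            omega
  exact key (Nat.card S - qc β.SameCycle S) α β hα hβ le_rfl

/-! ### Invariant-set helpers -/

lemma image_eq_of_maps_to {σ : Pz} {B : Set ℤ} (hfin : B.Finite)
    (h : ∀ x ∈ B, σ x ∈ B) : ⇑σ '' B = B := by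
  apply Set.eq_of_subset_of_ncard_le
  · rintro _ ⟨x, hx, rfl⟩
    exact h x hx
  · rw [Set.ncard_image_of_injective _ σ.injective]
  · exact hfin

lemma inv_maps_to {σ : Pz} {B : Set ℤ} (hfin : B.Finite)
    (h : ∀ x ∈ B, σ x ∈ B) : ∀ x ∈ B, σ⁻¹ x ∈ B := by
  intro x hx
  rw [← image_eq_of_maps_to hfin h] at hx
  obtain ⟨w, hw, he⟩ := hx
  have : σ⁻¹ x = w := by rw [← he]; exact σ.symm_apply_apply w
  rw [this]; exact hw

lemma pow_maps_to {σ : Pz} {B : Set ℤ} (h : ∀ x ∈ B, σ x ∈ B) :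
    ∀ (k : ℕ) (x : ℤ), x ∈ B → (σ ^ k) x ∈ B := by
  intro k
  induction k with
  | zero => intro x hx; simpa using hx
  | succ n ih =>
      intro x hx
      rw [pow_succ', Equiv.Perm.mul_apply]
      exact h _ (ih x hx)

lemma zpow_maps_to {σ : Pz} {B : Set ℤ} (hfin : B.Finite)
    (h : ∀ x ∈ B, σ x ∈ B) : ∀ (m : ℤ) (x : ℤ), x ∈ B → (σ ^ m) x ∈ B := by
  intro m x hx
  cases m with
  | ofNat k => exact pow_maps_to h k x hx
  | negSucc k =>
      rw [zpow_negSucc, ← inv_pow]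
      exact pow_maps_to (inv_maps_to hfin h) (k+1) x hx

lemma sameCycle_mem_of_maps_to {σ : Pz} {B : Set ℤ} (hfin : B.Finite)
    (h : ∀ x ∈ B, σ x ∈ B) {a b : ℤ} (hsc : σ.SameCycle a b) (ha : a ∈ B) : b ∈ B := by
  obtain ⟨m, hm⟩ := hsc
  rw [← hm]
  exact zpow_maps_to hfin h m a ha

/-- transfer same-cycle along agreement on an invariant set -/
lemma sameCycle_of_agree {σ ρ : Pz} {B S : Set ℤ} (hfin : S.Finite) (hfix : FixOut σ S)
    (hagree : ∀ x ∈ B, σ x = ρ x) (hinv : ∀ x ∈ B, σ x ∈ B) {a b : ℤ} (ha : a ∈ B)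
    (h : σ.SameCycle a b) : ρ.SameCycle a b := by
  obtain ⟨k, hk⟩ := (sameCycle_iff_pow hfin hfix).mp h
  subst hk
  clear h
  have key : ∀ j : ℕ, (σ ^ j) a = (ρ ^ j) a ∧ (σ ^ j) a ∈ B := by
    intro j
    induction j with
    | zero => exact ⟨rfl, by simpa using ha⟩
    | succ m ih =>
        obtain ⟨ih1, ih2⟩ := ih
        constructor
        · rw [pow_succ', pow_succ', Equiv.Perm.mul_apply, Equiv.Perm.mul_apply,
            hagree _ ih2, ih1]
        · rw [pow_succ', Equiv.Perm.mul_apply]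
          exact hinv _ ih2
    
  exact ⟨(k : ℤ), by rw [zpow_natCast, ← (key k).1]⟩

lemma qc_conj {σ : Pz} (f : Pz) (S : Set ℤ) :
    qc σ.SameCycle S = qc (f * σ * f⁻¹).SameCycle (⇑f '' S) := by
  refine qc_equiv (Equiv.Set.image f S f.injective) (fun a b => ?_)
  rw [Equiv.Perm.sameCycle_conj]
  have h1 : ((Equiv.Set.image (⇑f) S f.injective) a : ℤ) = f a := rfl
  have h2 : ((Equiv.Set.image (⇑f) S f.injective) b : ℤ) = f b := rfl
  rw [h1, h2]
  simp

lemma qc_neg_conj {σ τ : Pz} (hconj : (Equiv.neg ℤ) * σ * (Equiv.neg ℤ) = τ) (S : Set ℤ) :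
    qc σ.SameCycle S = qc τ.SameCycle ((fun x : ℤ => -x) '' S) :=
  qc_equiv (Equiv.Set.image _ S neg_injective)
    (fun a b => (sameCycle_neg_conj hconj a b).symm)

lemma mem_negimg {A : Set ℤ} {x : ℤ} : x ∈ (fun y : ℤ => -y) '' A ↔ -x ∈ A := by
  constructor
  · rintro ⟨w, hw, rfl⟩
    simpa using hw
  · intro h
    exact ⟨-x, h, by simp⟩

end St9

open St9

/-- for `γ` with exactly two orbits `V₁, V₂` on `I` and `π` a
premap on `±I` connecting `±V₁` and `±V₂`: `χ(γ,π) = 2` iff for some sign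
`ε = ±1`, `π` does not connect `A = V₁ ∪ εV₂` to `−A`, and the permutation
induced by `π` on `A` satisfies the (Mingo–Nica) annular-noncrossing count
`#(π|) + #((γ₊γ₋⁻¹)|⁻¹ π|⁻¹) = |I|`.  (Under the no-connect condition, the
permutations involved preserve `A`, so induced permutations are restrictions
and their cycle counts are orbit counts on `A`.) -/
theorem statement9 (I V₁ V₂ : Finset ℤ) (hI : ∀ k ∈ I, 0 < k)
    (hunion : V₁ ∪ V₂ = I) (hVdisj : Disjoint V₁ V₂)
    (h1 : V₁.Nonempty) (h2 : V₂.Nonempty)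
    (γ π : Equiv.Perm ℤ)
    (hγs : ∀ k : ℤ, k ∉ I → γ k = k)
    (hγ1 : ∀ a ∈ V₁, ∀ b ∈ V₁, γ.SameCycle a b)
    (hγ2 : ∀ a ∈ V₂, ∀ b ∈ V₂, γ.SameCycle a b)
    (hγ12 : ∀ a ∈ V₁, ∀ b ∈ V₂, ¬ γ.SameCycle a b)
    (hπ : IsPremap π)
    (hπs : ∀ k : ℤ, k ∉ I → -k ∉ I → π k = k)
    (hconn : ∃ a b : ℤ, (a ∈ V₁ ∨ -a ∈ V₁) ∧ (b ∈ V₂ ∨ -b ∈ V₂) ∧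
      π.SameCycle a b) :
    chi I γ π = 2 ↔
      ∃ ε : ℤ, (ε = 1 ∨ ε = -1) ∧
        (∀ a b : ℤ, (a ∈ V₁ ∨ ε * a ∈ V₂) → (b ∈ V₁ ∨ ε * b ∈ V₂) →
          ¬ π.SameCycle a (-b)) ∧
        orbitCountOn π {k : ℤ | k ∈ V₁ ∨ ε * k ∈ V₂} +
            orbitCountOn ((γ * (permMinus γ)⁻¹)⁻¹ * π⁻¹)
              {k : ℤ | k ∈ V₁ ∨ ε * k ∈ V₂} = I.card := by
  classical
  set δ : Pz := Equiv.neg ℤ with hδdef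
  set γm : Pz := permMinus γ with hγmdef
  set ρ : Pz := γ * γm⁻¹ with hρdef
  set τ : Pz := ρ⁻¹ * π⁻¹ with hτdef
  set X : Set ℤ := pmSet I with hXdef
  have hXiff : ∀ k : ℤ, k ∈ X ↔ (k ∈ I ∨ -k ∈ I) := fun k => Iff.rfl
  have hInotneg : ∀ k, k ∈ I → -k ∉ I := fun k hk hnk => by
    have := hI k hk; have := hI _ hnk; omega
  have hXeq : X = ↑I ∪ (fun x : ℤ => -x) '' ↑I := by
    ext k
    rw [Set.mem_union, mem_negimg, Finset.mem_coe, Finset.mem_coe]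
    exact hXiff k
  have hXfin : X.Finite := by
    rw [hXeq]; exact (I.finite_toSet).union (I.finite_toSet.image _)
  have hXcard : Nat.card X = 2 * I.card := by
    have hdisj : Disjoint (↑I : Set ℤ) ((fun x : ℤ => -x) '' ↑I) := by
      rw [Set.disjoint_left]
      rintro k hk hneg
      rw [mem_negimg, Finset.mem_coe] at hneg
      exact hInotneg k (Finset.mem_coe.mp hk) hneg
    rw [Nat.card_coe_set_eq, hXeq,
      Set.ncard_union_eq hdisj (I.finite_toSet) (I.finite_toSet.image _),
      Set.ncard_image_of_injective _ neg_injective, Set.ncard_coe_finset]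
    omega
  -- δ facts
  have hδ2 : δ * δ = 1 := by
    apply Equiv.ext; intro x
    simp [hδdef]
  have hδinv : δ⁻¹ = δ := (inv_eq_of_mul_eq_one_right hδ2).symm
  -- γ facts
  have hfixγI : FixOut γ ↑I := fun k hk => hγs k (by simpa using hk)
  have hγIinv : ∀ k : ℤ, k ∈ (↑I : Set ℤ) → γ⁻¹ k ∈ (↑I : Set ℤ) :=
    inv_maps_to I.finite_toSet (fun x hx => hfixγI.mem hx)
  have hγinvfix : ∀ x : ℤ, x ∉ I → γ⁻¹ x = x := fun x hx => by
    conv_lhs => rw [← hγs x hx]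
    rw [Equiv.Perm.inv_apply_self]
  have hγmapp : ∀ x : ℤ, γm x = -(γ (-x)) := fun x => rfl
  have hγm_inv_app : ∀ x : ℤ, γm⁻¹ x = -(γ⁻¹ (-x)) := by
    intro x
    have hval : γm (-(γ⁻¹ (-x))) = x := by
      rw [hγmapp, neg_neg, Equiv.Perm.apply_inv_self, neg_neg]
    exact γm.injective (by rw [Equiv.Perm.apply_inv_self, hval])
  -- ρ facts
  have hρapp : ∀ x : ℤ, ρ x = γ (-(γ⁻¹ (-x))) := fun x => by
    rw [hρdef, Equiv.Perm.mul_apply, hγm_inv_app]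
  have hρI : ∀ x ∈ (↑I : Set ℤ), ρ x = γ x := by
    intro x hx
    have hmx : -x ∉ I := hInotneg x (Finset.mem_coe.mp hx)
    rw [hρapp, hγinvfix _ hmx, neg_neg]
  have hρnegI : ∀ x ∈ (↑I : Set ℤ), ρ (-x) = -(γ⁻¹ x) := by
    intro x hx
    rw [hρapp, neg_neg]
    have h2 : γ⁻¹ x ∈ (↑I : Set ℤ) := hγIinv x hx
    have h3 : -(γ⁻¹ x) ∉ I := hInotneg _ (Finset.mem_coe.mp h2)
    rw [hγs _ h3]
  have hfixρ : FixOut ρ X := by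
    intro x hx
    rw [hXiff] at hx; push_neg at hx
    rw [hρapp, hγinvfix _ hx.2, neg_neg, hγs x hx.1]
  have hfixπ : FixOut π X := by
    intro x hx
    rw [hXiff] at hx; push_neg at hx
    exact hπs x hx.1 hx.2
  have hfixτ : FixOut τ X := by
    rw [hτdef]; exact (hfixρ.inv).mul (hfixπ.inv)
  have hfixγm : FixOut γm X := by
    intro x hx
    rw [hXiff] at hx; push_neg at hx
    rw [hγmapp, hγs _ hx.2, neg_neg]
  -- conjugation identities
  have hπconj : δ * π * δ = π⁻¹ := hπ.1
  have hρinv_app : ∀ x : ℤ, ρ⁻¹ x = -(γ (-(γ⁻¹ x))) := by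
    intro x
    rw [hρdef, mul_inv_rev, inv_inv, Equiv.Perm.mul_apply, hγmapp]
  have hρconj : δ * ρ * δ = ρ⁻¹ := by
    apply Equiv.ext; intro x
    simp only [hδdef, Equiv.Perm.mul_apply, Equiv.neg_apply, hρapp, hρinv_app, neg_neg]
  have hρinvconj : δ * ρ⁻¹ * δ = ρ := by
    have h := congrArg (·⁻¹) hρconj
    rw [mul_inv_rev, mul_inv_rev, hδinv, inv_inv] at h
    rw [mul_assoc]
    exact h
  have hπinvconj : δ * π⁻¹ * δ = π := by
    have h := congrArg (·⁻¹) hπconj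
    rw [mul_inv_rev, mul_inv_rev, hδinv, inv_inv] at h
    rw [mul_assoc]
    exact h
  have hτconj : δ * (ρ * π) * δ = τ := by
    have hc : δ * (ρ * π) * δ = (δ * ρ * δ) * (δ * π * δ) := by
      calc δ * (ρ * π) * δ = δ * ρ * ((δ * δ) * (π * δ)) := by
            rw [hδ2, one_mul]
            simp only [mul_assoc]
      _ = (δ * ρ * δ) * (δ * π * δ) := by simp only [mul_assoc]
    rw [hc, hρconj, hπconj, hτdef]
  -- blocks
  have hV1I : ∀ x, x ∈ (↑V₁ : Set ℤ) → x ∈ (↑I : Set ℤ) := by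
    intro x hx
    rw [Finset.mem_coe] at hx ⊢
    rw [← hunion]; exact Finset.mem_union_left _ hx
  have hV2I : ∀ x, x ∈ (↑V₂ : Set ℤ) → x ∈ (↑I : Set ℤ) := by
    intro x hx
    rw [Finset.mem_coe] at hx ⊢
    rw [← hunion]; exact Finset.mem_union_right _ hx
  have hγB1 : ∀ u, u ∈ (↑V₁ : Set ℤ) → γ u ∈ (↑V₁ : Set ℤ) := by
    intro u hu
    rw [Finset.mem_coe] at hu ⊢
    by_cases h : γ u ∈ I
    · rw [← hunion, Finset.mem_union] at h
      rcases h with h | h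
      · exact h
      · exact absurd ⟨1, by simp⟩ (hγ12 u hu (γ u) h)
    · have h2 : γ u = u := γ.injective (hγs _ h)
      rw [h2]; exact hu
  have hγB2 : ∀ u, u ∈ (↑V₂ : Set ℤ) → γ u ∈ (↑V₂ : Set ℤ) := by
    intro u hu
    rw [Finset.mem_coe] at hu ⊢
    by_cases h : γ u ∈ I
    · rw [← hunion, Finset.mem_union] at h
      rcases h with h | h
      · exact absurd ⟨-1, by simp⟩ (hγ12 (γ u) h u hu)
      · exact h
    · have h2 : γ u = u := γ.injective (hγs _ h)
      rw [h2]; exact hu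
  have hγB1inv := inv_maps_to V₁.finite_toSet hγB1
  have hγB2inv := inv_maps_to V₂.finite_toSet hγB2
  have hρB1 : ∀ u, u ∈ (↑V₁ : Set ℤ) → ρ u ∈ (↑V₁ : Set ℤ) := fun u hu => by
    rw [hρI u (hV1I u hu)]; exact hγB1 u hu
  have hρB2 : ∀ u, u ∈ (↑V₂ : Set ℤ) → ρ u ∈ (↑V₂ : Set ℤ) := fun u hu => by
    rw [hρI u (hV2I u hu)]; exact hγB2 u hu
  have hρB3 : ∀ u, u ∈ ((fun x : ℤ => -x) '' ↑V₁) → ρ u ∈ ((fun x : ℤ => -x) '' ↑V₁) := by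
    rintro u ⟨w, hw, rfl⟩
    rw [hρnegI w (hV1I w hw)]
    exact ⟨γ⁻¹ w, hγB1inv w hw, rfl⟩
  have hρB4 : ∀ u, u ∈ ((fun x : ℤ => -x) '' ↑V₂) → ρ u ∈ ((fun x : ℤ => -x) '' ↑V₂) := by
    rintro u ⟨w, hw, rfl⟩
    rw [hρnegI w (hV2I w hw)]
    exact ⟨γ⁻¹ w, hγB2inv w hw, rfl⟩
  have hposV1 : ∀ x, x ∈ (↑V₁ : Set ℤ) → 0 < x := fun x hx =>
    hI x (Finset.mem_coe.mp (hV1I x hx))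
  have hposV2 : ∀ x, x ∈ (↑V₂ : Set ℤ) → 0 < x := fun x hx =>
    hI x (Finset.mem_coe.mp (hV2I x hx))
  -- same-cycle within blocks for ρ
  have hscB1 : ∀ a, a ∈ (↑V₁ : Set ℤ) → ∀ b, b ∈ (↑V₁ : Set ℤ) → ρ.SameCycle a b := by
    intro a ha b hb
    exact sameCycle_of_agree I.finite_toSet hfixγI
      (fun x hx => (hρI x (hV1I x hx)).symm) hγB1 ha
      (hγ1 a (Finset.mem_coe.mp ha) b (Finset.mem_coe.mp hb))
  have hscB2 : ∀ a, a ∈ (↑V₂ : Set ℤ) → ∀ b, b ∈ (↑V₂ : Set ℤ) → ρ.SameCycle a b := by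
    intro a ha b hb
    exact sameCycle_of_agree I.finite_toSet hfixγI
      (fun x hx => (hρI x (hV2I x hx)).symm) hγB2 ha
      (hγ2 a (Finset.mem_coe.mp ha) b (Finset.mem_coe.mp hb))
  have hscρneg : ∀ a b : ℤ, ρ.SameCycle (-a) (-b) ↔ ρ.SameCycle a b := fun a b =>
    (Equiv.Perm.sameCycle_inv).symm.trans (sameCycle_neg_conj hρconj a b)
  have hscB3 : ∀ a, a ∈ ((fun x : ℤ => -x) '' ↑V₁) → ∀ b, b ∈ ((fun x : ℤ => -x) '' ↑V₁) →
      ρ.SameCycle a b := by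
    rintro _ ⟨a, ha, rfl⟩ _ ⟨b, hb, rfl⟩
    exact (hscρneg a b).mpr (hscB1 a ha b hb)
  have hscB4 : ∀ a, a ∈ ((fun x : ℤ => -x) '' ↑V₂) → ∀ b, b ∈ ((fun x : ℤ => -x) '' ↑V₂) →
      ρ.SameCycle a b := by
    rintro _ ⟨a, ha, rfl⟩ _ ⟨b, hb, rfl⟩
    exact (hscρneg a b).mpr (hscB2 a ha b hb)
  -- X split and the four-cycle count of ρ
  have hXsplit : X = ((↑V₁ ∪ ↑V₂) ∪
      (((fun x : ℤ => -x) '' ↑V₁) ∪ ((fun x : ℤ => -x) '' ↑V₂))) := by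
    rw [hXeq, ← hunion, Finset.coe_union, Set.image_union]
  have hqρX : qc ρ.SameCycle X = 4 := by
    have hf1 : (↑V₁ : Set ℤ).Finite := V₁.finite_toSet
    have hf2 : (↑V₂ : Set ℤ).Finite := V₂.finite_toSet
    have hf3 : ((fun x : ℤ => -x) '' ↑V₁).Finite := hf1.image _
    have hf4 : ((fun x : ℤ => -x) '' ↑V₂).Finite := hf2.image _
    have hpos12 : ∀ x, x ∈ (↑V₁ ∪ ↑V₂ : Set ℤ) → 0 < x := by
      rintro x (h | h)
      · exact hposV1 x h
      · exact hposV2 x h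
    have hneg34 : ∀ x, x ∈ (((fun x : ℤ => -x) '' ↑V₁) ∪ ((fun x : ℤ => -x) '' ↑V₂)) →
        x < 0 := by
      rintro x (⟨w, hw, rfl⟩ | ⟨w, hw, rfl⟩)
      · have := hposV1 w hw; show -w < 0; omega
      · have := hposV2 w hw; show -w < 0; omega
    have hinv12 : ∀ x, x ∈ (↑V₁ ∪ ↑V₂ : Set ℤ) → ρ x ∈ (↑V₁ ∪ ↑V₂ : Set ℤ) := by
      rintro x (h | h)
      · exact Or.inl (hρB1 x h)
      · exact Or.inr (hρB2 x h)
    have e0 : qc ρ.SameCycle X = qc ρ.SameCycle (↑V₁ ∪ ↑V₂) +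
        qc ρ.SameCycle (((fun x : ℤ => -x) '' ↑V₁) ∪ ((fun x : ℤ => -x) '' ↑V₂)) := by
      rw [hXsplit]
      refine qc_union (sc_equiv ρ) (hf1.union hf2) (hf3.union hf4) ?_ ?_
      · rw [Set.disjoint_left]
        intro a ha hb
        have := hpos12 a ha; have := hneg34 a hb; omega
      · intro a ha b hb hsc
        have hbin : b ∈ (↑V₁ ∪ ↑V₂ : Set ℤ) :=
          sameCycle_mem_of_maps_to (hf1.union hf2) hinv12 hsc ha
        have := hpos12 b hbin; have := hneg34 b hb; omega
    have e1 : qc ρ.SameCycle (↑V₁ ∪ ↑V₂ : Set ℤ) =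
        qc ρ.SameCycle ↑V₁ + qc ρ.SameCycle ↑V₂ := by
      refine qc_union (sc_equiv ρ) hf1 hf2 (Finset.disjoint_coe.mpr hVdisj) ?_
      intro a ha b hb hsc
      have hbin : b ∈ (↑V₁ : Set ℤ) := sameCycle_mem_of_maps_to hf1 hρB1 hsc ha
      exact Finset.disjoint_left.mp hVdisj (Finset.mem_coe.mp hbin) (Finset.mem_coe.mp hb)
    have e2 : qc ρ.SameCycle (((fun x : ℤ => -x) '' ↑V₁) ∪ ((fun x : ℤ => -x) '' ↑V₂)) =
        qc ρ.SameCycle ((fun x : ℤ => -x) '' ↑V₁) +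
        qc ρ.SameCycle ((fun x : ℤ => -x) '' ↑V₂) := by
      refine qc_union (sc_equiv ρ) hf3 hf4 ?_ ?_
      · rw [Set.disjoint_left]
        intro a ha hb
        rw [mem_negimg, Finset.mem_coe] at ha hb
        exact Finset.disjoint_left.mp hVdisj ha hb
      · intro a ha b hb hsc
        have hbin : b ∈ ((fun x : ℤ => -x) '' ↑V₁) :=
          sameCycle_mem_of_maps_to hf3 hρB3 hsc ha
        rw [mem_negimg, Finset.mem_coe] at hbin hb
        exact Finset.disjoint_left.mp hVdisj hbin hb
    obtain ⟨x1, hx1⟩ := h1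
    obtain ⟨x2, hx2⟩ := h2
    have c1 : qc ρ.SameCycle (↑V₁ : Set ℤ) = 1 :=
      qc_const ⟨x1, Finset.mem_coe.mpr hx1⟩ (fun a b => hscB1 a a.2 b b.2)
    have c2 : qc ρ.SameCycle (↑V₂ : Set ℤ) = 1 :=
      qc_const ⟨x2, Finset.mem_coe.mpr hx2⟩ (fun a b => hscB2 a a.2 b b.2)
    have c3 : qc ρ.SameCycle ((fun x : ℤ => -x) '' ↑V₁) = 1 :=
      qc_const ⟨-x1, ⟨x1, Finset.mem_coe.mpr hx1, rfl⟩⟩ (fun a b => hscB3 a a.2 b b.2)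
    have c4 : qc ρ.SameCycle ((fun x : ℤ => -x) '' ↑V₂) = 1 :=
      qc_const ⟨-x2, ⟨x2, Finset.mem_coe.mpr hx2, rfl⟩⟩ (fun a b => hscB4 a a.2 b b.2)
    omega
  -- conversion of the third chi term
  have hτX : qc (γ⁻¹ * π⁻¹ * γm).SameCycle X = qc τ.SameCycle X := by
    have hkey : γm * (γ⁻¹ * π⁻¹ * γm) * γm⁻¹ = τ := by
      rw [hτdef, hρdef, mul_inv_rev, inv_inv]
      group
    have himg : ⇑γm '' X = X := image_eq_of_maps_to hXfin (fun x hx => hfixγm.mem hx)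
    conv_lhs => rw [qc_conj γm X]
    rw [hkey, himg]
  have hchi : chi I γ π = 2 ↔ qc π.SameCycle X + qc τ.SameCycle X = 2 * I.card := by
    have hex : chi I γ π = (orbitCountOn (γ * (permMinus γ)⁻¹) (pmSet I) : ℚ) / 2 +
        (orbitCountOn π (pmSet I) : ℚ) / 2 +
        (orbitCountOn (γ⁻¹ * π⁻¹ * permMinus γ) (pmSet I) : ℚ) / 2 - I.card := rfl
    rw [hex, ← hXdef, ← hγmdef, ← hρdef]
    rw [show orbitCountOn ρ X = qc ρ.SameCycle X from rfl,
      show orbitCountOn π X = qc π.SameCycle X from rfl,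
      show orbitCountOn (γ⁻¹ * π⁻¹ * γm) X = qc (γ⁻¹ * π⁻¹ * γm).SameCycle X from rfl,
      hqρX, hτX]
    constructor
    · intro h
      have h2 : (qc π.SameCycle X : ℚ) + qc τ.SameCycle X = 2 * I.card := by
        push_cast at h ⊢
        linarith
      exact_mod_cast h2
    · intro h
      have h2 : (qc π.SameCycle X : ℚ) + qc τ.SameCycle X = 2 * I.card := by
        exact_mod_cast h
      push_cast at h2 ⊢
      linarith
  -- the pairing lemma
  have pairing : ∀ A : Set ℤ, A.Finite → (A ∪ (fun x : ℤ => -x) '' A) = X →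
      Disjoint A ((fun x : ℤ => -x) '' A) → (∀ x ∈ A, ρ x ∈ A) →
      (∀ u ∈ A, ∀ v ∈ A, ¬ π.SameCycle u (-v)) →
      qc π.SameCycle X = 2 * qc π.SameCycle A ∧
        qc τ.SameCycle X = 2 * qc τ.SameCycle A := by
    intro A hAfin hAU hAD hρA hNC
    have hnegAfin : ((fun x : ℤ => -x) '' A).Finite := hAfin.image _
    have hAX : ∀ x ∈ A, x ∈ X := fun x hx => by rw [← hAU]; exact Or.inl hx
    have hπA : ∀ x ∈ A, π x ∈ A := by
      intro x hx
      have hin : π x ∈ X := hfixπ.mem (hAX x hx)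
      rw [← hAU] at hin
      rcases hin with hin | hin
      · exact hin
      · exfalso
        rw [mem_negimg] at hin
        have hc := hNC x hx (-(π x)) hin
        rw [neg_neg] at hc
        exact hc ⟨1, by simp⟩
    have hπAinv := inv_maps_to hAfin hπA
    have hρAinv := inv_maps_to hAfin hρA
    have hτA : ∀ x ∈ A, τ x ∈ A := by
      intro x hx
      rw [hτdef, Equiv.Perm.mul_apply]
      exact hρAinv _ (hπAinv x hx)
    have hρimgA : ⇑ρ '' A = A := image_eq_of_maps_to hAfin hρA
    have hncπ : ∀ a ∈ A, ∀ b ∈ (fun x : ℤ => -x) '' A, ¬ π.SameCycle a b := by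
      intro a ha b hb hsc
      rw [mem_negimg] at hb
      have hc := hNC a ha (-b) hb
      rw [neg_neg] at hc
      exact hc hsc
    have hncτ : ∀ a ∈ A, ∀ b ∈ (fun x : ℤ => -x) '' A, ¬ τ.SameCycle a b := by
      intro a ha b hb hsc
      have hbA : b ∈ A := sameCycle_mem_of_maps_to hAfin hτA hsc ha
      exact Set.disjoint_left.mp hAD hbA hb
    constructor
    · have e1 : qc π.SameCycle X = qc π.SameCycle A +
          qc π.SameCycle ((fun x : ℤ => -x) '' A) := by
        rw [← hAU]; exact qc_union (sc_equiv π) hAfin hnegAfin hAD hncπ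
      have e2 : qc π.SameCycle ((fun x : ℤ => -x) '' A) = qc π.SameCycle A := by
        have h3 := qc_neg_conj hπinvconj A
        rw [← h3, qc_inv]
      omega
    · have e1 : qc τ.SameCycle X = qc τ.SameCycle A +
          qc τ.SameCycle ((fun x : ℤ => -x) '' A) := by
        rw [← hAU]; exact qc_union (sc_equiv τ) hAfin hnegAfin hAD hncτ
      have e2 : qc τ.SameCycle ((fun x : ℤ => -x) '' A) = qc τ.SameCycle A := by
        have h3 : qc (ρ * π).SameCycle A = qc τ.SameCycle ((fun x : ℤ => -x) '' A) :=
          qc_neg_conj hτconj A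
        have h5 : ρ * τ * ρ⁻¹ = (ρ * π)⁻¹ := by
          rw [hτdef, mul_inv_rev ρ π, ← mul_assoc ρ ρ⁻¹ π⁻¹, mul_inv_cancel ρ, one_mul]
        have h4 : qc τ.SameCycle A = qc (ρ * π).SameCycle A := by
          calc qc τ.SameCycle A = qc (ρ * τ * ρ⁻¹).SameCycle (⇑ρ '' A) := qc_conj ρ A
          _ = qc ((ρ * π)⁻¹).SameCycle A := by rw [h5, hρimgA]
          _ = qc (ρ * π).SameCycle A := qc_inv
        rw [← h3, h4]
      omega
  -- membership translations
  have hmemA1 : ∀ k : ℤ, (k ∈ V₁ ∨ (1:ℤ) * k ∈ V₂) ↔ k ∈ (↑V₁ ∪ ↑V₂ : Set ℤ) := by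
    intro k
    rw [Set.mem_union, Finset.mem_coe, Finset.mem_coe, one_mul]
  have hmemA2 : ∀ k : ℤ, (k ∈ V₁ ∨ (-1:ℤ) * k ∈ V₂) ↔
      k ∈ (↑V₁ ∪ (fun x : ℤ => -x) '' ↑V₂ : Set ℤ) := by
    intro k
    rw [Set.mem_union, mem_negimg, Finset.mem_coe, Finset.mem_coe, neg_one_mul]
  have hsetA1 : {k : ℤ | k ∈ V₁ ∨ (1:ℤ) * k ∈ V₂} = (↑V₁ ∪ ↑V₂ : Set ℤ) := by
    ext k; exact hmemA1 k
  have hsetA2 : {k : ℤ | k ∈ V₁ ∨ (-1:ℤ) * k ∈ V₂} =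
      (↑V₁ ∪ (fun x : ℤ => -x) '' ↑V₂ : Set ℤ) := by
    ext k; exact hmemA2 k
  have hnegneg2 : (fun x : ℤ => -x) '' ((fun x : ℤ => -x) '' ↑V₂) = (↑V₂ : Set ℤ) := by
    ext k; rw [mem_negimg, mem_negimg, neg_neg]
  -- A1 = V₁ ∪ V₂ facts
  have hA1fin : ((↑V₁ ∪ ↑V₂) : Set ℤ).Finite := V₁.finite_toSet.union V₂.finite_toSet
  have hA1U : (((↑V₁ ∪ ↑V₂) ∪ (fun x : ℤ => -x) '' (↑V₁ ∪ ↑V₂)) : Set ℤ) = X := by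
    rw [Set.image_union, hXsplit]
  have hA1D : Disjoint ((↑V₁ ∪ ↑V₂) : Set ℤ) ((fun x : ℤ => -x) '' (↑V₁ ∪ ↑V₂)) := by
    rw [Set.disjoint_left]
    rintro a ha hb
    have hpa : 0 < a := by
      rcases ha with h | h
      · exact hposV1 a h
      · exact hposV2 a h
    rw [Set.image_union] at hb
    rcases hb with ⟨w, hw, hwe⟩ | ⟨w, hw, hwe⟩
    · have he : -w = a := hwe
      have := hposV1 w hw; omega
    · have he : -w = a := hwe
      have := hposV2 w hw; omega
  have hρA1 : ∀ x ∈ ((↑V₁ ∪ ↑V₂) : Set ℤ), ρ x ∈ ((↑V₁ ∪ ↑V₂) : Set ℤ) := by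
    rintro x (h | h)
    · exact Or.inl (hρB1 x h)
    · exact Or.inr (hρB2 x h)
  -- A2 = V₁ ∪ (-V₂) facts
  have hA2fin : ((↑V₁ ∪ (fun x : ℤ => -x) '' ↑V₂) : Set ℤ).Finite :=
    V₁.finite_toSet.union (V₂.finite_toSet.image _)
  have hA2U : (((↑V₁ ∪ (fun x : ℤ => -x) '' ↑V₂) ∪
      (fun x : ℤ => -x) '' (↑V₁ ∪ (fun x : ℤ => -x) '' ↑V₂)) : Set ℤ) = X := by
    rw [Set.image_union, hnegneg2]
    ext k
    rw [hXsplit]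
    simp only [Set.mem_union]
    constructor
    · rintro ((h | h) | (h | h))
      · exact Or.inl (Or.inl h)
      · exact Or.inr (Or.inr h)
      · exact Or.inr (Or.inl h)
      · exact Or.inl (Or.inr h)
    · rintro ((h | h) | (h | h))
      · exact Or.inl (Or.inl h)
      · exact Or.inr (Or.inr h)
      · exact Or.inr (Or.inl h)
      · exact Or.inl (Or.inr h)
  have hA2D : Disjoint ((↑V₁ ∪ (fun x : ℤ => -x) '' ↑V₂) : Set ℤ)
      ((fun x : ℤ => -x) '' (↑V₁ ∪ (fun x : ℤ => -x) '' ↑V₂)) := by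
    rw [Set.image_union, hnegneg2, Set.disjoint_left]
    rintro a (ha | ha) (hb | hb)
    · obtain ⟨w, hw, hwe⟩ := hb
      have he : -w = a := hwe
      have := hposV1 a ha; have := hposV1 w hw; omega
    · exact Finset.disjoint_left.mp hVdisj ha hb
    · rw [mem_negimg] at ha
      obtain ⟨w, hw, hwe⟩ := hb
      have he : -w = a := hwe
      have h5 : -a ∈ (↑V₁ : Set ℤ) := by rw [← he, neg_neg]; exact hw
      exact Finset.disjoint_left.mp hVdisj (Finset.mem_coe.mp h5) (Finset.mem_coe.mp ha)
    · rw [mem_negimg] at ha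
      have := hposV2 (-a) ha; have := hposV2 a hb; omega
  have hρA2 : ∀ x ∈ ((↑V₁ ∪ (fun x : ℤ => -x) '' ↑V₂) : Set ℤ),
      ρ x ∈ ((↑V₁ ∪ (fun x : ℤ => -x) '' ↑V₂) : Set ℤ) := by
    rintro x (h | h)
    · exact Or.inl (hρB1 x h)
    · exact Or.inr (hρB4 x h)
  obtain ⟨x1, hx1⟩ := h1
  obtain ⟨x2, hx2⟩ := h2
  rw [hchi]
  constructor
  · -- forward direction
    intro hpq
    have hτπ : τ * π = ρ⁻¹ := by
      rw [hτdef, mul_assoc ρ⁻¹ π⁻¹ π, inv_mul_cancel π, mul_one]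
    have hgen := genus_bound hXfin τ π hfixτ hfixπ
    rw [hτπ] at hgen
    have hqρinv : qc ρ⁻¹.SameCycle X = 4 := by
      have : qc ρ⁻¹.SameCycle X = qc ρ.SameCycle X := qc_inv
      rw [this, hqρX]
    have hjc : 2 ≤ qc (JRel τ π) X := by
      rw [hqρinv, hXcard] at hgen
      omega
    have hReq : Equivalence (JRel τ π) := jrel_equiv _ _
    have hRπ : ∀ u, JRel τ π u (π u) := jrel_apply_right τ π
    have hRτ : ∀ u, JRel τ π u (τ u) := jrel_apply_left τ π
    have hRρ : ∀ u, JRel τ π u (ρ u) := by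
      intro u
      have hs1 : JRel τ π (ρ u) (π (ρ u)) := hRπ _
      have hs2 : JRel τ π (π (ρ u)) (τ (π (ρ u))) := hRτ _
      have hs3 : τ (π (ρ u)) = u := by
        rw [hτdef, Equiv.Perm.mul_apply, Equiv.Perm.inv_apply_self, Equiv.Perm.inv_apply_self]
      rw [hs3] at hs2
      exact hReq.symm (hReq.trans hs1 hs2)
    have hRscπ : ∀ {a b : ℤ}, π.SameCycle a b → JRel τ π a b := fun h =>
      sameCycle_subset_of_closed hXfin hfixπ hReq hRπ h
    have hRscρ : ∀ {a b : ℤ}, ρ.SameCycle a b → JRel τ π a b := fun h =>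
      sameCycle_subset_of_closed hXfin hfixρ hReq hRρ h
    have hπneg : ∀ u : ℤ, -(π u) = π⁻¹ (-u) := by
      intro u
      have h := congrArg (fun σ : Pz => σ (-u)) hπconj
      simp only [Equiv.Perm.mul_apply, hδdef, Equiv.neg_apply, neg_neg] at h
      exact h
    have hτneg0 : ∀ u : ℤ, -(ρ (π u)) = τ (-u) := by
      intro u
      have h := congrArg (fun σ : Pz => σ (-u)) hτconj
      simp only [Equiv.Perm.mul_apply, hδdef, Equiv.neg_apply, neg_neg] at h
      exact h
    have hτneg : ∀ u : ℤ, -(τ u) = ρ (π (-u)) := by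
      intro u
      have h := hτneg0 (-u)
      rw [neg_neg] at h
      rw [← h, neg_neg]
    have hRδ : ∀ u v, JRel τ π u v → JRel τ π (-u) (-v) := by
      intro u v h
      induction h with
      | rel u v huv =>
          rcases huv with h | h
          · subst h
            rw [hτneg u]
            exact hReq.trans (hRπ (-u)) (hRρ (π (-u)))
          · subst h
            rw [hπneg u]
            have hh := hRπ (π⁻¹ (-u))
            rw [Equiv.Perm.apply_inv_self] at hh
            exact hReq.symm hh
      | refl u => exact hReq.refl _
      | symm _ _ _ ih => exact hReq.symm ih
      | trans _ _ _ _ _ ih1 ih2 => exact hReq.trans ih1 ih2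
    have hRB1 : ∀ u, u ∈ (↑V₁ : Set ℤ) → JRel τ π u x1 := fun u hu =>
      hRscρ (hscB1 u hu x1 (Finset.mem_coe.mpr hx1))
    have hRB2 : ∀ u, u ∈ (↑V₂ : Set ℤ) → JRel τ π u x2 := fun u hu =>
      hRscρ (hscB2 u hu x2 (Finset.mem_coe.mpr hx2))
    obtain ⟨a, b, haV, hbV, hab⟩ := hconn
    have hRab : JRel τ π a b := hRscπ hab
    have hax : JRel τ π a x1 ∨ JRel τ π a (-x1) := by
      rcases haV with h | h
      · exact Or.inl (hRB1 a (Finset.mem_coe.mpr h))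
      · right
        have hh := hRδ _ _ (hRB1 (-a) (Finset.mem_coe.mpr h))
        rwa [neg_neg] at hh
    have hbx : JRel τ π b x2 ∨ JRel τ π b (-x2) := by
      rcases hbV with h | h
      · exact Or.inl (hRB2 b (Finset.mem_coe.mpr h))
      · right
        have hh := hRδ _ _ (hRB2 (-b) (Finset.mem_coe.mpr h))
        rwa [neg_neg] at hh
    have hs : JRel τ π x1 x2 ∨ JRel τ π x1 (-x2) := by
      rcases hax with h1' | h1' <;> rcases hbx with h2' | h2'
      · exact Or.inl (hReq.trans (hReq.symm h1') (hReq.trans hRab h2'))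
      · exact Or.inr (hReq.trans (hReq.symm h1') (hReq.trans hRab h2'))
      · right
        have h3 : JRel τ π (-x1) x2 := hReq.trans (hReq.symm h1') (hReq.trans hRab h2')
        have hh := hRδ _ _ h3
        rwa [neg_neg] at hh
      · left
        have h3 : JRel τ π (-x1) (-x2) := hReq.trans (hReq.symm h1') (hReq.trans hRab h2')
        have hh := hRδ _ _ h3
        rwa [neg_neg, neg_neg] at hh
    have hbad : JRel τ π x1 (-x1) → False := by
      intro hb
      have hx2x1 : JRel τ π x2 x1 := by
        rcases hs with h | h
        · exact hReq.symm h
        · have h3 := hRδ _ _ h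
          rw [neg_neg] at h3
          exact hReq.symm (hReq.trans hb h3)
      have hall : ∀ u, u ∈ X → JRel τ π u x1 := by
        intro u hu
        rw [hXsplit] at hu
        rcases hu with (hu | hu) | (hu | hu)
        · exact hRB1 u hu
        · exact hReq.trans (hRB2 u hu) hx2x1
        · obtain ⟨w, hw, rfl⟩ := hu
          have h3 := hRδ _ _ (hRB1 w hw)
          exact hReq.trans h3 (hReq.symm hb)
        · obtain ⟨w, hw, rfl⟩ := hu
          have h3 := hRδ _ _ (hRB2 w hw)
          have h4 : JRel τ π (-x2) x1 := by
            have h5 := hRδ _ _ hx2x1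
            exact hReq.trans h5 (hReq.symm hb)
          exact hReq.trans h3 h4
      have hone : qc (JRel τ π) X = 1 :=
        qc_const ⟨x1, by rw [hXiff]; exact Or.inl (Finset.mem_coe.mp (hV1I x1 (Finset.mem_coe.mpr hx1)))⟩
          (fun u v => hReq.trans (hall u u.2) (hReq.symm (hall v v.2)))
      omega
    rcases hs with hcase | hcase
    · -- ε = 1
      have hux : ∀ w, w ∈ ((↑V₁ ∪ ↑V₂) : Set ℤ) → JRel τ π w x1 := by
        rintro w (hw | hw)
        · exact hRB1 w hw
        · exact hReq.trans (hRB2 w hw) (hReq.symm hcase)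
      have hNC1 : ∀ u ∈ ((↑V₁ ∪ ↑V₂) : Set ℤ), ∀ v ∈ ((↑V₁ ∪ ↑V₂) : Set ℤ),
          ¬ π.SameCycle u (-v) := by
        intro u hu v hv hsc
        apply hbad
        exact hReq.trans (hReq.symm (hux u hu))
          (hReq.trans (hRscπ hsc) (hRδ _ _ (hux v hv)))
      refine ⟨1, Or.inl rfl, ?_, ?_⟩
      · intro a' b' ha' hb'
        exact hNC1 a' ((hmemA1 a').mp ha') b' ((hmemA1 b').mp hb')
      · obtain ⟨hp2, hq2⟩ := pairing _ hA1fin hA1U hA1D hρA1 hNC1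
        rw [hsetA1, orbitCountOn_eq_qc, orbitCountOn_eq_qc]
        omega
    · -- ε = -1
      have hux : ∀ w, w ∈ ((↑V₁ ∪ (fun x : ℤ => -x) '' ↑V₂) : Set ℤ) →
          JRel τ π w x1 := by
        rintro w (hw | hw)
        · exact hRB1 w hw
        · obtain ⟨v, hv, rfl⟩ := hw
          exact hReq.trans (hRδ _ _ (hRB2 v hv)) (hReq.symm hcase)
      have hNC2 : ∀ u ∈ ((↑V₁ ∪ (fun x : ℤ => -x) '' ↑V₂) : Set ℤ),
          ∀ v ∈ ((↑V₁ ∪ (fun x : ℤ => -x) '' ↑V₂) : Set ℤ), ¬ π.SameCycle u (-v) := by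
        intro u hu v hv hsc
        apply hbad
        exact hReq.trans (hReq.symm (hux u hu))
          (hReq.trans (hRscπ hsc) (hRδ _ _ (hux v hv)))
      refine ⟨-1, Or.inr rfl, ?_, ?_⟩
      · intro a' b' ha' hb'
        exact hNC2 a' ((hmemA2 a').mp ha') b' ((hmemA2 b').mp hb')
      · obtain ⟨hp2, hq2⟩ := pairing _ hA2fin hA2U hA2D hρA2 hNC2
        rw [hsetA2, orbitCountOn_eq_qc, orbitCountOn_eq_qc]
        omega
  · -- backward direction
    rintro ⟨ε, hε, hNCg, hcnt⟩
    rcases hε with rfl | rfl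
    · have hNC1 : ∀ u ∈ ((↑V₁ ∪ ↑V₂) : Set ℤ), ∀ v ∈ ((↑V₁ ∪ ↑V₂) : Set ℤ),
          ¬ π.SameCycle u (-v) := by
        intro u hu v hv
        exact hNCg u v ((hmemA1 u).mpr hu) ((hmemA1 v).mpr hv)
      obtain ⟨hp2, hq2⟩ := pairing _ hA1fin hA1U hA1D hρA1 hNC1
      rw [hsetA1, orbitCountOn_eq_qc, orbitCountOn_eq_qc] at hcnt
      omega
    · have hNC2 : ∀ u ∈ ((↑V₁ ∪ (fun x : ℤ => -x) '' ↑V₂) : Set ℤ),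
          ∀ v ∈ ((↑V₁ ∪ (fun x : ℤ => -x) '' ↑V₂) : Set ℤ), ¬ π.SameCycle u (-v) := by
        intro u hu v hv
        exact hNCg u v ((hmemA2 u).mpr hu) ((hmemA2 v).mpr hv)
      obtain ⟨hp2, hq2⟩ := pairing _ hA2fin hA2U hA2D hρA2 hNC2
      rw [hsetA2, orbitCountOn_eq_qc, orbitCountOn_eq_qc] at hcnt
      omega
end

section
/- Wick's formula: if (f_λ)_{λ∈Λ} is a centred real Gaussian family, then for any λ₁,…,λ_n ∈ Λ, E(f_{λ₁}⋯f_{λ_n}) = Σ_{π ∈ P₂(n)} Π_{{k,l} ∈ π} E(f_{λ_k} f_{λ_l}), where P₂(n) is the set of pairings of {1,…,n}; in particular the expectation is 0 when n is odd. -/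
open MeasureTheory ProbabilityTheory Filter Real Set Finset
open scoped Classical NNReal ENNReal

noncomputable section
namespace Wick


lemma integrable_abs_rpow_mul_exp {b : ℝ} (hb : 0 < b) (m : ℕ) :
    Integrable (fun x : ℝ => |x| ^ (m:ℝ) * Real.exp (-b * x ^ 2)) := by
  rw [← integrableOn_univ, ← @Iio_union_Ici _ _ (0 : ℝ), integrableOn_union,
    integrableOn_Ici_iff_integrableOn_Ioi]
  constructor
  · rw [← (Measure.measurePreserving_neg (volume : Measure ℝ)).integrableOn_comp_preimage
        (Homeomorph.neg ℝ).measurableEmbedding]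
    simp only [Function.comp_def, neg_sq, neg_preimage, neg_Iio, neg_neg, neg_zero, abs_neg]
    refine ((integrableOn_rpow_mul_exp_neg_mul_sq hb (s := (m:ℝ)) (lt_of_lt_of_le (by norm_num) (Nat.cast_nonneg m))).congr_fun
      (fun x hx => ?_) measurableSet_Ioi)
    rw [abs_of_pos hx]
  · refine ((integrableOn_rpow_mul_exp_neg_mul_sq hb (s := (m:ℝ)) (lt_of_lt_of_le (by norm_num) (Nat.cast_nonneg m))).congr_fun
      (fun x hx => ?_) measurableSet_Ioi)
    rw [abs_of_pos hx]

lemma integrable_pow_mul_exp {b : ℝ} (hb : 0 < b) (m : ℕ) :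
    Integrable (fun x : ℝ => x ^ m * Real.exp (-b * x ^ 2)) := by
  have hmeas : AEStronglyMeasurable (fun x : ℝ => x ^ m * Real.exp (-b * x ^ 2))
      (volume : Measure ℝ) :=
    ((measurable_id.pow_const m).mul
      (((measurable_id.pow_const 2).const_mul (-b)).exp)).aestronglyMeasurable
  refine MeasureTheory.Integrable.mono' (integrable_abs_rpow_mul_exp hb m) hmeas ?_
  refine Filter.Eventually.of_forall fun x => ?_
  rw [Real.norm_eq_abs, abs_mul, Real.abs_exp, Real.rpow_natCast, ← abs_pow]

lemma tendsto_pow_mul_exp_atTop {b : ℝ} (hb : 0 < b) (m : ℕ) :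
    Tendsto (fun x : ℝ => x ^ m * Real.exp (-b * x ^ 2)) atTop (nhds 0) := by
  have h : (fun x : ℝ => x ^ (m:ℝ) * Real.exp (-b * x ^ 2)) =o[atTop]
      fun x : ℝ => Real.exp (-(1/2) * x) := rpow_mul_exp_neg_mul_sq_isLittleO_exp_neg hb (m : ℝ)
  have h2 : Tendsto (fun x : ℝ => Real.exp (-(1/2) * x)) atTop (nhds 0) := by
    apply Real.tendsto_exp_atBot.comp
    exact (tendsto_const_mul_atBot_of_neg (by norm_num)).mpr tendsto_id
  have h3 := h.trans_tendsto h2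
  refine h3.congr' ?_
  filter_upwards [eventually_ge_atTop (0:ℝ)] with x hx
  rw [Real.rpow_natCast]

lemma tendsto_pow_mul_exp_atBot {b : ℝ} (hb : 0 < b) (m : ℕ) :
    Tendsto (fun x : ℝ => x ^ m * Real.exp (-b * x ^ 2)) atBot (nhds 0) := by
  have h := (tendsto_pow_mul_exp_atTop hb m).comp tendsto_neg_atBot_atTop
  have : (fun x : ℝ => (-x) ^ m * Real.exp (-b * (-x) ^ 2)) =
      fun x : ℝ => (-1)^m * (x ^ m * Real.exp (-b * x ^ 2)) := by
    ext x; rw [neg_pow, neg_sq]; ring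
  rw [Function.comp_def] at h
  rw [this] at h
  have := h.const_mul ((-1:ℝ)^m)
  simpa [← mul_assoc, ← mul_pow] using this

/-- integration by parts recursion for Gaussian-type integrals -/
lemma integral_pow_mul_exp_rec {b : ℝ} (hb : 0 < b) (m : ℕ) :
    (2*b) * ∫ x : ℝ, x ^ (m+2) * Real.exp (-b * x ^ 2) =
      (m+1) * ∫ x : ℝ, x ^ m * Real.exp (-b * x ^ 2) := by
  set F : ℝ → ℝ := fun x => x ^ (m+1) * Real.exp (-b * x ^ 2) with hF
  set F' : ℝ → ℝ := fun x =>
    (m+1) * (x ^ m * Real.exp (-b * x ^ 2)) - (2*b) * (x ^ (m+2) * Real.exp (-b * x ^ 2)) with hF'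
  have hderiv : ∀ x : ℝ, HasDerivAt F (F' x) x := by
    intro x
    have h1 : HasDerivAt (fun x : ℝ => x ^ (m+1)) ((m+1) * x ^ m) x := by
      simpa using hasDerivAt_pow (m+1) x
    have h3 : HasDerivAt (fun x : ℝ => -b * x ^ 2) (-b * (2*x)) x := by
      simpa using ((hasDerivAt_pow 2 x).const_mul (-b))
    have h2 := h3.exp
    have := h1.mul h2
    refine HasDerivAt.congr_deriv (f := F) this ?_
    simp only [hF']
    ring
  have hint : Integrable F' := by
    exact (((integrable_pow_mul_exp hb m).const_mul _).sub
      ((integrable_pow_mul_exp hb (m+2)).const_mul _))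
  have htop : Tendsto F atTop (nhds 0) := tendsto_pow_mul_exp_atTop hb (m+1)
  have hbot : Tendsto F atBot (nhds 0) := tendsto_pow_mul_exp_atBot hb (m+1)
  have hIoi : ∫ x in Ioi (0:ℝ), F' x = 0 - F 0 :=
    MeasureTheory.integral_Ioi_of_hasDerivAt_of_tendsto' (fun x _ => hderiv x)
      hint.integrableOn htop
  have hIic : ∫ x in Iic (0:ℝ), F' x = F 0 - 0 :=
    MeasureTheory.integral_Iic_of_hasDerivAt_of_tendsto' (fun x _ => hderiv x)
      hint.integrableOn hbot
  have htot : ∫ x : ℝ, F' x = 0 := by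
    rw [← intervalIntegral.integral_Iic_add_Ioi (b := (0:ℝ)) hint.integrableOn hint.integrableOn,
      hIoi, hIic]
    ring
  rw [hF', integral_sub (((integrable_pow_mul_exp hb m)).const_mul _)
    ((integrable_pow_mul_exp hb (m+2)).const_mul _), integral_const_mul, integral_const_mul] at htot
  linarith



/-- number of perfect matchings of a `k`-element set -/
def cnt : ℕ → ℕ
  | 0 => 1
  | 1 => 0
  | (k+2) => (k+1) * cnt k

lemma gaussianReal_eq_withDensity {v : ℝ≥0} (hv : v ≠ 0) :
    gaussianReal 0 v = (volume : Measure ℝ).withDensity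
      (fun x => ((gaussianPDFReal 0 v x).toNNReal : ℝ≥0∞)) := by
  rw [gaussianReal_of_var_ne_zero 0 hv]
  congr 1

lemma meas_toNNReal_pdf (v : ℝ≥0) :
    Measurable (fun x => (gaussianPDFReal 0 v x).toNNReal) :=
  (measurable_gaussianPDFReal 0 v).real_toNNReal

lemma integral_fun_gaussianReal {v : ℝ≥0} (hv : v ≠ 0) (g : ℝ → ℝ) :
    ∫ x, g x ∂(gaussianReal 0 v) = ∫ x, gaussianPDFReal 0 v x * g x := by
  rw [gaussianReal_eq_withDensity hv, integral_withDensity_eq_integral_smul (meas_toNNReal_pdf v)]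
  refine integral_congr_ae (Filter.Eventually.of_forall fun x => ?_)
  simp only [NNReal.smul_def, smul_eq_mul, Real.coe_toNNReal _ (gaussianPDFReal_nonneg 0 v x)]

lemma pdf_eq {v : ℝ≥0} (x : ℝ) :
    gaussianPDFReal 0 v x = (√(2 * π * v))⁻¹ * Real.exp (-(2 * (v:ℝ))⁻¹ * x ^ 2) := by
  rw [gaussianPDFReal]
  congr 1
  rw [sub_zero]
  congr 1
  rw [neg_div, div_eq_inv_mul, neg_mul]

lemma integrable_pow_gaussian (v : ℝ≥0) (m : ℕ) :
    Integrable (fun x => x ^ m) (gaussianReal 0 v) := by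
  by_cases hv : v = 0
  · rw [hv, gaussianReal_zero_var]
    exact (integrable_const ((0:ℝ) ^ m)).congr (ae_eq_dirac (fun x : ℝ => x ^ m)).symm
  · have hv' : (0:ℝ) < (2 * (v:ℝ))⁻¹ := by
      have : (0:ℝ) < v := lt_of_le_of_ne (v.coe_nonneg) (by exact_mod_cast (Ne.symm hv))
      positivity
    rw [gaussianReal_eq_withDensity hv,
      integrable_withDensity_iff_integrable_smul (meas_toNNReal_pdf v)]
    have hco : ∀ y : ℝ, ((gaussianPDFReal 0 v y).toNNReal : ℝ) = gaussianPDFReal 0 v y :=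
      fun y => Real.coe_toNNReal _ (gaussianPDFReal_nonneg 0 v y)
    refine (((integrable_pow_mul_exp hv' m).const_mul ((√(2 * π * v))⁻¹)).congr
      (Filter.Eventually.of_forall fun x => ?_))
    simp only [NNReal.smul_def, smul_eq_mul, hco]
    simp only [pdf_eq]
    ring

lemma gaussian_moment_one (v : ℝ≥0) : ∫ x, x ∂(gaussianReal 0 v) = 0 := by
  have hmap := gaussianReal_map_const_mul (μ := 0) (v := v) (-1)
  have h1 : (⟨(-1:ℝ)^2, sq_nonneg _⟩ : ℝ≥0) = 1 := by
    ext; norm_num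
  replace hmap : Measure.map (fun x : ℝ => -1 * x) (gaussianReal 0 v) = gaussianReal 0 v := by
    rw [hmap]; congr 1
    · ring
    · ext; simp
  have hint : ∫ x, x ∂(gaussianReal 0 v) = ∫ x, -1 * x ∂(gaussianReal 0 v) := by
    conv_lhs => rw [← hmap]
    rw [integral_map (φ := fun x : ℝ => -1 * x) (f := fun x : ℝ => x)
      (measurable_id.const_mul (-1)).aemeasurable measurable_id.aestronglyMeasurable]
  have h2 : ∫ x, -1 * x ∂(gaussianReal 0 v) = -∫ x, x ∂(gaussianReal 0 v) := by
    rw [integral_const_mul]; ring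
  rw [h2] at hint
  linarith

lemma gaussian_moment (v : ℝ≥0) : ∀ m : ℕ,
    ∫ x, x ^ m ∂(gaussianReal 0 v) = (cnt m : ℝ) * (v:ℝ) ^ (m / 2)
  | 0 => by simp [cnt]
  | 1 => by simpa [cnt] using gaussian_moment_one v
  | (k+2) => by
    have ih := gaussian_moment v k
    have hdiv : (k + 2) / 2 = k / 2 + 1 := Nat.add_div_right k (by norm_num)
    have hcnt : (cnt (k+2) : ℝ) = (k+1) * cnt k := by rw [cnt]; push_cast; ring
    by_cases hv : v = 0
    · subst hv
      rw [gaussianReal_zero_var, integral_dirac]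
      simp [hdiv]
    · have hvpos : (0:ℝ) < v := lt_of_le_of_ne (v.coe_nonneg) (by exact_mod_cast (Ne.symm hv))
      set b : ℝ := (2 * (v:ℝ))⁻¹ with hb
      have hbpos : 0 < b := by positivity
      set C : ℝ := (√(2 * π * v))⁻¹ with hC
      have key : ∀ m : ℕ, ∫ x, x ^ m ∂(gaussianReal 0 v)
          = C * ∫ x, x ^ m * Real.exp (-b * x ^ 2) := by
        intro m
        rw [integral_fun_gaussianReal hv, ← integral_const_mul]
        refine integral_congr_ae (Filter.Eventually.of_forall fun x => ?_)
        simp only [pdf_eq]; ring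
      have hrec := integral_pow_mul_exp_rec hbpos k
      have h2b : 2 * b = (v:ℝ)⁻¹ := by
        rw [hb]; field_simp
      have hvne : (v:ℝ) ≠ 0 := ne_of_gt hvpos
      have hIk : C * ∫ x, x ^ k * Real.exp (-b * x ^ 2) = (cnt k : ℝ) * (v:ℝ) ^ (k/2) := by
        rw [← key k]; exact ih
      have hIk2 : (∫ x, x ^ (k+2) * Real.exp (-b * x ^ 2))
          = (v:ℝ) * (((k:ℝ)+1) * ∫ x, x ^ k * Real.exp (-b * x ^ 2)) :=
        calc (∫ x, x ^ (k+2) * Real.exp (-b * x ^ 2))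
            = (v:ℝ) * ((v:ℝ)⁻¹ * ∫ x, x ^ (k+2) * Real.exp (-b * x ^ 2)) := by
              rw [← mul_assoc, mul_inv_cancel₀ hvne, one_mul]
          _ = (v:ℝ) * (2 * b * ∫ x, x ^ (k+2) * Real.exp (-b * x ^ 2)) := by rw [h2b]
          _ = (v:ℝ) * (((k:ℝ)+1) * ∫ x, x ^ k * Real.exp (-b * x ^ 2)) := by rw [hrec]
      rw [key (k+2), hIk2, hdiv, hcnt, pow_succ]
      linear_combination ((k:ℝ)+1) * (v:ℝ) * hIk



variable {α : Type*} [Fintype α] [DecidableEq α]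

def isMatching (s : Finset α) (P : Finset (Finset α)) : Prop :=
  (∀ B ∈ P, B ⊆ s ∧ B.card = 2) ∧ ∀ i ∈ s, ∃! B, B ∈ P ∧ i ∈ B

def matchings (s : Finset α) : Finset (Finset (Finset α)) :=
  Finset.univ.filter (fun P => isMatching s P)

lemma mem_matchings {s : Finset α} {P : Finset (Finset α)} :
    P ∈ matchings s ↔ isMatching s P := by
  simp [matchings]

lemma matchings_empty : matchings (∅ : Finset α) = {∅} := by
  ext P
  simp only [mem_matchings, Finset.mem_singleton, isMatching]
  constructor
  · rintro ⟨h1, _⟩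
    by_contra hP
    obtain ⟨B, hB⟩ := Finset.nonempty_iff_ne_empty.mpr hP
    have := (h1 B hB).2
    have hBe : B = ∅ := Finset.subset_empty.mp (h1 B hB).1
    rw [hBe] at this
    simp at this
  · rintro rfl
    refine ⟨fun B hB => absurd hB (Finset.notMem_empty B), fun i hi => absurd hi (Finset.notMem_empty i)⟩

lemma matchings_rec {s : Finset α} {a : α} (ha : a ∈ s) :
    matchings s = (s.erase a).biUnion
      (fun b => (matchings ((s.erase a).erase b)).image (insert ({a, b} : Finset α))) := by
  ext P
  simp only [Finset.mem_biUnion, Finset.mem_image]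
  constructor
  · intro hP
    rw [mem_matchings] at hP
    obtain ⟨hblocks, hcover⟩ := hP
    obtain ⟨B, ⟨hBP, haB⟩, huniq⟩ := hcover a ha
    obtain ⟨x, y, hxy, hBxy⟩ := Finset.card_eq_two.mp (hblocks B hBP).2
    -- identify b, the partner of a
    have hab : ∃ b, b ≠ a ∧ B = {a, b} := by
      rcases (by rw [hBxy] at haB; simpa using haB : a = x ∨ a = y) with rfl | rfl
      · exact ⟨y, fun h => hxy h.symm, by rw [hBxy]⟩
      · exact ⟨x, fun h => hxy h, by rw [hBxy]; exact Finset.pair_comm x a⟩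
    obtain ⟨b, hba, hBab⟩ := hab
    have hbB : b ∈ B := by rw [hBab]; simp
    have hbs : b ∈ s := (hblocks B hBP).1 hbB
    refine ⟨b, Finset.mem_erase.mpr ⟨hba, hbs⟩, P.erase B, ?_, ?_⟩
    · rw [mem_matchings]
      constructor
      · intro B' hB'
        have hB'P : B' ∈ P := Finset.mem_of_mem_erase hB'
        have hB'B : B' ≠ B := Finset.ne_of_mem_erase hB'
        refine ⟨fun i hiB' => ?_, (hblocks B' hB'P).2⟩
        have his : i ∈ s := (hblocks B' hB'P).1 hiB'
        refine Finset.mem_erase.mpr ⟨?_, Finset.mem_erase.mpr ⟨?_, his⟩⟩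
        · intro hieq
          obtain ⟨Bb, ⟨hBbP, hbBb⟩, huniqb⟩ := hcover b hbs
          have h1 : B' = Bb := huniqb B' ⟨hB'P, by rwa [hieq] at hiB'⟩
          have h2 : B = Bb := huniqb B ⟨hBP, hbB⟩
          exact hB'B (h1.trans h2.symm)
        · intro hieq
          obtain ⟨Ba, ⟨hBaP, haBa⟩, huniqa⟩ := hcover a ha
          have h1 : B' = Ba := huniqa B' ⟨hB'P, by rwa [hieq] at hiB'⟩
          have h2 : B = Ba := huniqa B ⟨hBP, haB⟩
          exact hB'B (h1.trans h2.symm)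
      · intro i hi
        have hia : i ≠ b := (Finset.mem_erase.mp hi).1
        have hib : i ≠ a := (Finset.mem_erase.mp (Finset.mem_erase.mp hi).2).1
        have his : i ∈ s := (Finset.mem_erase.mp (Finset.mem_erase.mp hi).2).2
        obtain ⟨B', ⟨hB'P, hiB'⟩, huniq'⟩ := hcover i his
        have hB'B : B' ≠ B := by
          rintro rfl
          rw [hBab] at hiB'
          rcases Finset.mem_insert.mp hiB' with h | h
          · exact hib h
          · exact hia (Finset.mem_singleton.mp h)
        refine ⟨B', ⟨Finset.mem_erase.mpr ⟨hB'B, hB'P⟩, hiB'⟩, ?_⟩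
        rintro B'' ⟨hB''P, hiB''⟩
        exact huniq' B'' ⟨Finset.mem_of_mem_erase hB''P, hiB''⟩
    · rw [← hBab, Finset.insert_erase hBP]
  · rintro ⟨b, hb, Q, hQ, rfl⟩
    obtain ⟨hba, hbs⟩ := Finset.mem_erase.mp hb
    rw [mem_matchings] at hQ ⊢
    obtain ⟨hblocks, hcover⟩ := hQ
    have habs : ({a, b} : Finset α) ⊆ s := by
      intro i hi
      rcases Finset.mem_insert.mp hi with rfl | h
      · exact ha
      · rw [Finset.mem_singleton.mp h]; exact hbs
    have hcard2 : ({a, b} : Finset α).card = 2 := Finset.card_pair (Ne.symm hba)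
    have hQnot : ∀ B ∈ Q, a ∉ B ∧ b ∉ B := by
      intro B hB
      have h1 := (hblocks B hB).1
      constructor
      · intro haB
        have := h1 haB
        exact (Finset.mem_erase.mp (Finset.mem_erase.mp this).2).1 rfl
      · intro hbB
        exact (Finset.mem_erase.mp (h1 hbB)).1 rfl
    constructor
    · intro B hB
      rcases Finset.mem_insert.mp hB with rfl | hBQ
      · exact ⟨habs, hcard2⟩
      · refine ⟨fun i hi => ?_, (hblocks B hBQ).2⟩
        exact Finset.mem_of_mem_erase (Finset.mem_of_mem_erase ((hblocks B hBQ).1 hi))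
    · intro i hi
      by_cases hiab : i ∈ ({a, b} : Finset α)
      · refine ⟨{a, b}, ⟨Finset.mem_insert_self _ _, hiab⟩, ?_⟩
        rintro B ⟨hBP, hiB⟩
        rcases Finset.mem_insert.mp hBP with rfl | hBQ
        · rfl
        · exfalso
          rcases Finset.mem_insert.mp hiab with rfl | h
          · exact (hQnot B hBQ).1 hiB
          · rw [Finset.mem_singleton.mp h] at hiB
            exact (hQnot B hBQ).2 hiB
      · have hit : i ∈ (s.erase a).erase b := by
          refine Finset.mem_erase.mpr ⟨?_, Finset.mem_erase.mpr ⟨?_, hi⟩⟩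
          · intro h; exact hiab (by rw [h]; simp)
          · intro h; exact hiab (by rw [h]; simp)
        obtain ⟨B, ⟨hBQ, hiB⟩, huniq⟩ := hcover i hit
        refine ⟨B, ⟨Finset.mem_insert_of_mem hBQ, hiB⟩, ?_⟩
        rintro B' ⟨hB'P, hiB'⟩
        rcases Finset.mem_insert.mp hB'P with rfl | hB'Q
        · exact absurd hiB' hiab
        · exact huniq B' ⟨hB'Q, hiB'⟩

lemma card_matchings : ∀ (s : Finset α), (matchings s).card = cnt s.card := by
  intro s
  induction s using Finset.strongInduction with
  | _ s ih =>
    rcases Finset.eq_empty_or_nonempty s with rfl | ⟨a, ha⟩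
    · rw [matchings_empty]; simp [cnt]
    · rw [matchings_rec ha, Finset.card_biUnion]
      · have hterm : ∀ b ∈ s.erase a,
            ((matchings ((s.erase a).erase b)).image (insert ({a, b} : Finset α))).card
              = cnt (s.card - 2) := by
          intro b hb
          have hsub : (s.erase a).erase b ⊂ s := by
            refine Finset.ssubset_of_subset_of_ssubset (Finset.erase_subset _ _) ?_
            exact Finset.erase_ssubset ha
          have hcardt : ((s.erase a).erase b).card = s.card - 2 := by
            rw [Finset.card_erase_of_mem hb, Finset.card_erase_of_mem ha]
            omega
          rw [Finset.card_image_of_injOn, ih _ hsub, hcardt]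
          -- injectivity
          intro Q hQ Q' hQ' hins
          simp only [Finset.coe_mem, Finset.mem_coe] at hQ hQ'
          rw [mem_matchings] at hQ hQ'
          have hnotQ : ({a, b} : Finset α) ∉ Q := by
            intro h
            have := (hQ.1 _ h).1 (Finset.mem_insert_self a {b})
            exact (Finset.mem_erase.mp (Finset.mem_erase.mp this).2).1 rfl
          have hnotQ' : ({a, b} : Finset α) ∉ Q' := by
            intro h
            have := (hQ'.1 _ h).1 (Finset.mem_insert_self a {b})
            exact (Finset.mem_erase.mp (Finset.mem_erase.mp this).2).1 rfl
          rw [← Finset.erase_insert hnotQ, ← Finset.erase_insert hnotQ', hins]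
        rw [Finset.sum_congr rfl hterm, Finset.sum_const, smul_eq_mul,
          Finset.card_erase_of_mem ha]
        rcases Nat.lt_or_ge s.card 2 with h2 | h2
        · have h1 : s.card = 1 := by
            have := Finset.card_pos.mpr ⟨a, ha⟩; omega
          rw [h1]
          simp [cnt]
        · obtain ⟨k, hk⟩ : ∃ k, s.card = k + 2 := ⟨s.card - 2, by omega⟩
          rw [hk, show k+2-1 = k+1 from rfl, show k+2-2 = k from rfl, cnt]
      · -- pairwise disjoint
        intro b hb b' hb' hne
        simp only [Finset.disjoint_left]
        intro P hP hP'
        obtain ⟨Q, hQ, rfl⟩ := Finset.mem_image.mp hP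
        obtain ⟨Q', hQ', heq⟩ := Finset.mem_image.mp hP'
        rw [mem_matchings] at hQ hQ'
        have hmem : ({a, b'} : Finset α) ∈ insert ({a, b} : Finset α) Q := by
          rw [← heq]; exact Finset.mem_insert_self _ _
        rcases Finset.mem_insert.mp hmem with h | h
        · have hb'ab : b' ∈ ({a, b} : Finset α) :=
            h ▸ (by simp : b' ∈ ({a, b'} : Finset α))
          rcases Finset.mem_insert.mp hb'ab with rfl | hbb
          · exact (Finset.mem_erase.mp hb').1 rfl
          · exact hne ((Finset.mem_singleton.mp hbb).symm)
        · have := (hQ.1 _ h).1 (Finset.mem_insert_self a {b'})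
          exact (Finset.mem_erase.mp (Finset.mem_erase.mp this).2).1 rfl

lemma matchings_card_blocks {s : Finset α} {P : Finset (Finset α)}
    (hP : P ∈ matchings s) : 2 * P.card = s.card := by
  rw [mem_matchings] at hP
  have hdisj : ∀ B ∈ P, ∀ B' ∈ P, B ≠ B' → Disjoint B B' := by
    intro B hB B' hB' hne
    rw [Finset.disjoint_left]
    intro i hiB hiB'
    have his : i ∈ s := (hP.1 B hB).1 hiB
    obtain ⟨B'', -, huniq⟩ := hP.2 i his
    exact hne ((huniq B ⟨hB, hiB⟩).trans (huniq B' ⟨hB', hiB'⟩).symm)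
  have hunion : (P.biUnion fun x => x) = s := by
    ext i
    simp only [Finset.mem_biUnion]
    constructor
    · rintro ⟨B, hB, hiB⟩
      exact (hP.1 B hB).1 hiB
    · intro hi
      obtain ⟨B, ⟨hB, hiB⟩, -⟩ := hP.2 i hi
      exact ⟨B, hB, hiB⟩
  have hcard := Finset.card_biUnion hdisj
  rw [hunion] at hcard
  have : ∑ B ∈ P, (B : Finset α).card = 2 * P.card := by
    rw [Finset.sum_congr rfl (fun B hB => (hP.1 B hB).2), Finset.sum_const, smul_eq_mul, mul_comm]
  omega



lemma neg_one_pow_sub {d t : ℕ} (ht : t ≤ d) : (-1:ℝ)^(d - t) = (-1:ℝ)^d * (-1:ℝ)^t := by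
  have h : (-1:ℝ)^(d-t) * ((-1:ℝ)^t * (-1:ℝ)^t) = (-1:ℝ)^d * (-1:ℝ)^t := by
    rw [← mul_assoc, ← pow_add, Nat.sub_add_cancel ht]
  have h2 : (-1:ℝ)^t * (-1:ℝ)^t = 1 := by
    rw [← pow_add, Even.neg_one_pow ⟨t, rfl⟩]
  rw [h2, mul_one] at h
  exact h

lemma aux_alt_sum {n : ℕ} (R : Finset (Fin n)) (c : ℝ) :
    ∑ S ∈ (Finset.univ : Finset (Fin n)).powerset,
      (-1:ℝ)^(n - S.card) * (if R ⊆ S then c else 0)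
      = if R = (Finset.univ : Finset (Fin n)) then c else 0 := by
  have h1 : ∑ S ∈ (Finset.univ : Finset (Fin n)).powerset,
      (-1:ℝ)^(n - S.card) * (if R ⊆ S then c else 0)
      = ∑ S ∈ (Finset.univ : Finset (Fin n)).powerset.filter (fun S => R ⊆ S),
        (-1:ℝ)^(n - S.card) * c := by
    rw [Finset.sum_filter]
    refine Finset.sum_congr rfl fun S _ => ?_
    by_cases h : R ⊆ S <;> simp [h]
  rw [h1]
  have h2 : ∑ S ∈ (Finset.univ : Finset (Fin n)).powerset.filter (fun S => R ⊆ S),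
      (-1:ℝ)^(n - S.card) * c
      = ∑ T ∈ Rᶜ.powerset, (-1:ℝ)^(n - (R.card + T.card)) * c := by
    refine Finset.sum_bij' (fun S _ => S \ R) (fun T _ => R ∪ T) ?_ ?_ ?_ ?_ ?_
    · intro S hS
      rw [Finset.mem_filter] at hS
      simp only [Finset.mem_powerset]
      intro i hi
      rw [Finset.mem_sdiff] at hi
      simpa using hi.2
    · intro T hT
      simp only [Finset.mem_filter, Finset.mem_powerset]
      exact ⟨Finset.subset_univ _, Finset.subset_union_left⟩
    · intro S hS
      rw [Finset.mem_filter] at hS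
      exact Finset.union_sdiff_of_subset hS.2
    · intro T hT
      rw [Finset.mem_powerset] at hT
      refine Finset.union_sdiff_cancel_left ?_
      rw [Finset.disjoint_left]
      intro i hiR hiT
      have := hT hiT
      simp only [Finset.mem_compl] at this
      exact this hiR
    · intro S hS
      rw [Finset.mem_filter] at hS
      congr 2
      rw [Finset.card_sdiff_of_subset hS.2, Nat.add_sub_cancel' (Finset.card_le_card hS.2)]
  rw [h2]
  have hTle : ∀ T ∈ Rᶜ.powerset, (-1:ℝ)^(n - (R.card + T.card)) * c
      = ((-1:ℝ)^(n - R.card) * c) * (-1:ℝ)^T.card := by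
    intro T hT
    rw [Finset.mem_powerset] at hT
    have h3 : T.card ≤ n - R.card := by
      have := Finset.card_le_card hT
      rw [Finset.card_compl, Fintype.card_fin] at this
      exact this
    have h4 : n - (R.card + T.card) = (n - R.card) - T.card := by omega
    rw [h4, neg_one_pow_sub h3]
    ring
  rw [Finset.sum_congr rfl hTle, ← Finset.mul_sum]
  have hz : ∑ T ∈ Rᶜ.powerset, (-1:ℝ)^T.card = if Rᶜ = ∅ then 1 else 0 := by
    have hZ := Finset.sum_powerset_neg_one_pow_card (x := Rᶜ)
    have : ((∑ T ∈ Rᶜ.powerset, (-1:ℤ)^T.card : ℤ) : ℝ)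
        = ∑ T ∈ Rᶜ.powerset, (-1:ℝ)^T.card := by push_cast; rfl
    rw [← this, hZ]
    split <;> norm_num
  rw [hz]
  by_cases hR : R = (Finset.univ : Finset (Fin n))
  · have hRc : Rᶜ = (∅ : Finset (Fin n)) := by rw [hR]; simp
    rw [if_pos hR, if_pos hRc, hR]
    simp
  · have hRc : Rᶜ ≠ (∅ : Finset (Fin n)) := by
      intro h
      exact hR (by simpa using congrArg (fun t => tᶜ) h)
    rw [if_neg hR, if_neg hRc]
    ring


lemma polarization {n : ℕ} {V : Type*} [AddCommGroup V] [Module ℝ V]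
    (T : MultilinearMap ℝ (fun _ : Fin n => V) ℝ)
    (hsym : ∀ (σ : Equiv.Perm (Fin n)) (y : Fin n → V), T (fun k => y (σ k)) = T y)
    (x : Fin n → V) :
    (n.factorial : ℝ) * T x =
      ∑ S ∈ (Finset.univ : Finset (Fin n)).powerset,
        (-1:ℝ)^(n - S.card) * T (fun _ => ∑ i ∈ S, x i) := by
  have hexp : ∀ S ∈ (Finset.univ : Finset (Fin n)).powerset,
      (-1:ℝ)^(n - S.card) * T (fun _ => ∑ i ∈ S, x i)
      = ∑ r : Fin n → Fin n, (-1:ℝ)^(n - S.card) *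
          (if Finset.image r Finset.univ ⊆ S then T (fun k => x (r k)) else 0) := by
    intro S _
    have hset : (Finset.univ : Finset (Fin n → Fin n)).filter
        (fun r => Finset.image r Finset.univ ⊆ S) = Fintype.piFinset (fun _ => S) := by
      ext r
      simp [Fintype.mem_piFinset, Finset.image_subset_iff]
    rw [MultilinearMap.map_sum_finset (A := fun _ => S) (g := fun _ j => x j), Finset.mul_sum,
      ← hset, Finset.sum_filter]
    refine Finset.sum_congr rfl fun r _ => ?_
    by_cases h : Finset.image r Finset.univ ⊆ S <;> simp [h]
  rw [Finset.sum_congr rfl hexp, Finset.sum_comm]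
  have hinner : ∀ r : Fin n → Fin n,
      ∑ S ∈ (Finset.univ : Finset (Fin n)).powerset, (-1:ℝ)^(n - S.card) *
        (if Finset.image r Finset.univ ⊆ S then T (fun k => x (r k)) else 0)
      = if Finset.image r Finset.univ = Finset.univ then T (fun k => x (r k)) else 0 :=
    fun r => aux_alt_sum (Finset.image r Finset.univ) (T (fun k => x (r k)))
  rw [Finset.sum_congr rfl (fun r _ => hinner r), ← Finset.sum_filter]
  have himage : (Finset.univ : Finset (Fin n → Fin n)).filter
      (fun r => Finset.image r Finset.univ = Finset.univ)
      = Finset.univ.image (fun σ : Equiv.Perm (Fin n) => ⇑σ) := by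
    ext r
    simp only [Finset.mem_filter, Finset.mem_univ, true_and, Finset.mem_image]
    constructor
    · intro h
      have hsurj : Function.Surjective r := by
        intro y
        have : y ∈ Finset.image r Finset.univ := by rw [h]; exact Finset.mem_univ y
        simpa using this
      exact ⟨Equiv.ofBijective r (Finite.surjective_iff_bijective.mp hsurj), rfl⟩
    · rintro ⟨σ, rfl⟩
      ext y
      simp only [Finset.mem_image, Finset.mem_univ, true_and, iff_true]
      exact ⟨σ.symm y, σ.apply_symm_apply y⟩
  rw [himage, Finset.sum_image (fun σ _ τ _ h => Equiv.coe_fn_injective h)]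
  have : ∀ σ : Equiv.Perm (Fin n), T (fun k => x (σ k)) = T x := fun σ => hsym σ x
  rw [Finset.sum_congr rfl (fun σ _ => this σ), Finset.sum_const, Finset.card_univ,
    Fintype.card_perm, Fintype.card_fin, nsmul_eq_mul]


section Main

variable {Ω Λ : Type*} [MeasureSpace Ω] {f : Λ → Ω → ℝ}

def Vspan (f : Λ → Ω → ℝ) : Submodule ℝ (Ω → ℝ) := Submodule.span ℝ (Set.range f)

lemma gauss_of_mem (hmeas : ∀ l, Measurable (f l))
    (hgauss : ∀ (n : ℕ) (ls : Fin n → Λ) (t : Fin n → ℝ), ∃ v : NNReal,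
      Measure.map (fun ω => ∑ i, t i * f (ls i) ω) ℙ = gaussianReal 0 v)
    {g : Ω → ℝ} (hg : g ∈ Vspan f) :
    Measurable g ∧ ∃ v : ℝ≥0, Measure.map g ℙ = gaussianReal 0 v := by
  obtain ⟨m, t, y, hsum⟩ := Submodule.mem_span_set'.mp hg
  choose ls hls using fun i => (y i).2
  have hfun : g = fun ω => ∑ i, t i * f (ls i) ω := by
    funext ω
    rw [← hsum, Finset.sum_apply]
    refine Finset.sum_congr rfl fun i _ => ?_
    rw [Pi.smul_apply, smul_eq_mul, hls i]
  constructor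
  · rw [hfun]
    exact Finset.measurable_sum _ fun i _ => (hmeas (ls i)).const_mul _
  · obtain ⟨v, hv⟩ := hgauss m ls t
    exact ⟨v, by rw [hfun]; exact hv⟩

lemma moment_of_map {g : Ω → ℝ} (hgm : Measurable g) {v : ℝ≥0}
    (hv : Measure.map g ℙ = gaussianReal 0 v) (m : ℕ) :
    Integrable (fun ω => (g ω)^m) ℙ ∧ ∫ ω, (g ω)^m = (cnt m : ℝ) * (v:ℝ)^(m/2) := by
  have h1 : Integrable (fun x : ℝ => x^m) (Measure.map g ℙ) := by
    rw [hv]; exact integrable_pow_gaussian v m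
  rw [integrable_map_measure ((measurable_id'.pow_const m).aestronglyMeasurable)
    hgm.aemeasurable] at h1
  refine ⟨h1, ?_⟩
  have h2 := integral_map (μ := (ℙ : Measure Ω)) hgm.aemeasurable
    (f := fun x : ℝ => x^m) ((measurable_id'.pow_const m).aestronglyMeasurable)
  rw [hv, gaussian_moment] at h2
  exact h2.symm

lemma integrable_prod_span (hP : IsProbabilityMeasure (ℙ : Measure Ω))
    (hmeas : ∀ l, Measurable (f l))
    (hgauss : ∀ (n : ℕ) (ls : Fin n → Λ) (t : Fin n → ℝ), ∃ v : NNReal,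
      Measure.map (fun ω => ∑ i, t i * f (ls i) ω) ℙ = gaussianReal 0 v)
    {ι : Type*} (s : Finset ι) (g : ι → Ω → ℝ)
    (hg : ∀ i ∈ s, g i ∈ Vspan f) : Integrable (fun ω => ∏ i ∈ s, g i ω) ℙ := by
  rcases Finset.eq_empty_or_nonempty s with rfl | hne
  · simpa using integrable_const (1:ℝ)
  have hgm : ∀ i ∈ s, Measurable (g i) := fun i hi => (gauss_of_mem hmeas hgauss (hg i hi)).1
  have hmeasprod : AEStronglyMeasurable (fun ω => ∏ i ∈ s, g i ω) ℙ :=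
    (Finset.measurable_prod s (fun i hi => hgm i hi)).aestronglyMeasurable
  have hint : ∀ i ∈ s, Integrable (fun ω => |g i ω| ^ s.card) ℙ := by
    intro i hi
    obtain ⟨hgm', v, hv⟩ := gauss_of_mem hmeas hgauss (hg i hi)
    refine ((moment_of_map hgm' hv s.card).1.abs).congr
      (Filter.Eventually.of_forall fun ω => ?_)
    simp only [abs_pow]
  refine Integrable.mono' (integrable_finset_sum s hint) hmeasprod
    (Filter.Eventually.of_forall fun ω => ?_)
  rw [Real.norm_eq_abs, Finset.abs_prod]
  obtain ⟨i₀, hi₀, hsup⟩ := Finset.exists_mem_eq_sup' hne (fun i => |g i ω|)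
  calc ∏ i ∈ s, |g i ω| ≤ ∏ _i ∈ s, (s.sup' hne fun i => |g i ω|) :=
        Finset.prod_le_prod (fun i _ => abs_nonneg _)
          (fun i hi => Finset.le_sup' (fun i => |g i ω|) hi)
    _ = (s.sup' hne fun i => |g i ω|) ^ s.card := Finset.prod_const _
    _ = |g i₀ ω| ^ s.card := by rw [hsup]
    _ ≤ ∑ i ∈ s, |g i ω| ^ s.card :=
        Finset.single_le_sum (f := fun i => |g i ω| ^ s.card) (fun i _ => by positivity) hi₀

lemma prod_update_eq {n : ℕ} [DecidableEq (Fin n)] (y : Fin n → Vspan f) (k : Fin n) (z : Vspan f)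
    (s : Finset (Fin n)) (hk : k ∈ s) (ω : Ω) :
    ∏ j ∈ s, ((Function.update y k z j : Ω → ℝ)) ω
      = (z : Ω → ℝ) ω * ∏ j ∈ s.erase k, (y j : Ω → ℝ) ω := by
  rw [← Finset.mul_prod_erase s _ hk, Function.update_self]
  congr 1
  exact Finset.prod_congr rfl fun j hj => by
    rw [Function.update_of_ne (Finset.mem_erase.mp hj).1]

lemma integral_prod_update_add (hP : IsProbabilityMeasure (ℙ : Measure Ω))
    (hmeas : ∀ l, Measurable (f l))
    (hgauss : ∀ (n : ℕ) (ls : Fin n → Λ) (t : Fin n → ℝ), ∃ v : NNReal,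
      Measure.map (fun ω => ∑ i, t i * f (ls i) ω) ℙ = gaussianReal 0 v)
    {n : ℕ} [DecidableEq (Fin n)] (y : Fin n → Vspan f) (k : Fin n) (u v : Vspan f)
    (s : Finset (Fin n)) (hk : k ∈ s) :
    ∫ ω, ∏ j ∈ s, ((Function.update y k (u+v) j : Ω → ℝ)) ω
      = (∫ ω, ∏ j ∈ s, ((Function.update y k u j : Ω → ℝ)) ω)
        + ∫ ω, ∏ j ∈ s, ((Function.update y k v j : Ω → ℝ)) ω := by
  have h1 : Integrable (fun ω => ∏ j ∈ s, ((Function.update y k u j : Ω → ℝ)) ω) ℙ :=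
    integrable_prod_span hP hmeas hgauss s _ (fun j _ => (Function.update y k u j).2)
  have h2 : Integrable (fun ω => ∏ j ∈ s, ((Function.update y k v j : Ω → ℝ)) ω) ℙ :=
    integrable_prod_span hP hmeas hgauss s _ (fun j _ => (Function.update y k v j).2)
  have heq : (fun ω => ∏ j ∈ s, ((Function.update y k (u+v) j : Ω → ℝ)) ω)
      = fun ω => (∏ j ∈ s, ((Function.update y k u j : Ω → ℝ)) ω)
        + ∏ j ∈ s, ((Function.update y k v j : Ω → ℝ)) ω := by
    funext ω
    rw [prod_update_eq y k _ s hk, prod_update_eq y k _ s hk, prod_update_eq y k _ s hk]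
    have : ((u + v : Vspan f) : Ω → ℝ) ω = (u : Ω → ℝ) ω + (v : Ω → ℝ) ω := rfl
    rw [this]; ring
  rw [heq]
  exact integral_add h1 h2

lemma integral_prod_update_smul {n : ℕ} [DecidableEq (Fin n)] (y : Fin n → Vspan f) (k : Fin n) (c : ℝ)
    (u : Vspan f) (s : Finset (Fin n)) (hk : k ∈ s) :
    ∫ ω, ∏ j ∈ s, ((Function.update y k (c • u) j : Ω → ℝ)) ω
      = c * ∫ ω, ∏ j ∈ s, ((Function.update y k u j : Ω → ℝ)) ω := by
  have heq : (fun ω => ∏ j ∈ s, ((Function.update y k (c • u) j : Ω → ℝ)) ω)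
      = fun ω => c * ∏ j ∈ s, ((Function.update y k u j : Ω → ℝ)) ω := by
    funext ω
    rw [prod_update_eq y k _ s hk, prod_update_eq y k _ s hk]
    have : ((c • u : Vspan f) : Ω → ℝ) ω = c * (u : Ω → ℝ) ω := rfl
    rw [this]; ring
  rw [heq, integral_const_mul]

def Mmap (hP : IsProbabilityMeasure (ℙ : Measure Ω))
    (hmeas : ∀ l, Measurable (f l))
    (hgauss : ∀ (n : ℕ) (ls : Fin n → Λ) (t : Fin n → ℝ), ∃ v : NNReal,
      Measure.map (fun ω => ∑ i, t i * f (ls i) ω) ℙ = gaussianReal 0 v)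
    (n : ℕ) : MultilinearMap ℝ (fun _ : Fin n => Vspan f) ℝ where
  toFun y := ∫ ω, ∏ i, (y i : Ω → ℝ) ω
  map_update_add' y k u v := by
    exact integral_prod_update_add hP hmeas hgauss y k u v Finset.univ (Finset.mem_univ k)
  map_update_smul' y k c u := by
    rw [smul_eq_mul]
    exact integral_prod_update_smul y k c u Finset.univ (Finset.mem_univ k)

def Wmap (hP : IsProbabilityMeasure (ℙ : Measure Ω))
    (hmeas : ∀ l, Measurable (f l))
    (hgauss : ∀ (n : ℕ) (ls : Fin n → Λ) (t : Fin n → ℝ), ∃ v : NNReal,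
      Measure.map (fun ω => ∑ i, t i * f (ls i) ω) ℙ = gaussianReal 0 v)
    (n : ℕ) : MultilinearMap ℝ (fun _ : Fin n => Vspan f) ℝ where
  toFun y := ∑ P ∈ matchings (Finset.univ : Finset (Fin n)),
    ∏ B ∈ P, ∫ ω, ∏ j ∈ B, (y j : Ω → ℝ) ω
  map_update_add' y k u v := by
    rw [← Finset.sum_add_distrib]
    refine Finset.sum_congr rfl fun P hP' => ?_
    rw [mem_matchings] at hP'
    obtain ⟨B₀, ⟨hB₀P, hkB₀⟩, huniq⟩ := hP'.2 k (Finset.mem_univ k)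
    have hconst : ∀ (z : Vspan f), ∀ B ∈ P.erase B₀,
        (∫ ω, ∏ j ∈ B, ((Function.update y k z j : Ω → ℝ)) ω)
          = ∫ ω, ∏ j ∈ B, ((y j : Ω → ℝ)) ω := by
      intro z B hB
      congr 1
      funext ω
      refine Finset.prod_congr rfl fun j hj => ?_
      have hjk : j ≠ k := by
        rintro rfl
        exact (Finset.ne_of_mem_erase hB) (huniq B ⟨Finset.mem_of_mem_erase hB, hj⟩)
      rw [Function.update_of_ne hjk]
    rw [← Finset.mul_prod_erase P _ hB₀P, ← Finset.mul_prod_erase P _ hB₀P,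
      ← Finset.mul_prod_erase P _ hB₀P,
      Finset.prod_congr rfl (hconst (u+v)), Finset.prod_congr rfl (hconst u),
      Finset.prod_congr rfl (hconst v),
      integral_prod_update_add hP hmeas hgauss y k u v B₀ hkB₀]
    ring
  map_update_smul' y k c u := by
    rw [smul_eq_mul, Finset.mul_sum]
    refine Finset.sum_congr rfl fun P hP' => ?_
    rw [mem_matchings] at hP'
    obtain ⟨B₀, ⟨hB₀P, hkB₀⟩, huniq⟩ := hP'.2 k (Finset.mem_univ k)
    have hconst : ∀ (z : Vspan f), ∀ B ∈ P.erase B₀,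
        (∫ ω, ∏ j ∈ B, ((Function.update y k z j : Ω → ℝ)) ω)
          = ∫ ω, ∏ j ∈ B, ((y j : Ω → ℝ)) ω := by
      intro z B hB
      congr 1
      funext ω
      refine Finset.prod_congr rfl fun j hj => ?_
      have hjk : j ≠ k := by
        rintro rfl
        exact (Finset.ne_of_mem_erase hB) (huniq B ⟨Finset.mem_of_mem_erase hB, hj⟩)
      rw [Function.update_of_ne hjk]
    rw [← Finset.mul_prod_erase P _ hB₀P, ← Finset.mul_prod_erase P _ hB₀P,
      Finset.prod_congr rfl (hconst (c • u)), Finset.prod_congr rfl (hconst u),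
      integral_prod_update_smul y k c u B₀ hkB₀]
    ring

lemma Msym (hP : IsProbabilityMeasure (ℙ : Measure Ω))
    (hmeas : ∀ l, Measurable (f l))
    (hgauss : ∀ (n : ℕ) (ls : Fin n → Λ) (t : Fin n → ℝ), ∃ v : NNReal,
      Measure.map (fun ω => ∑ i, t i * f (ls i) ω) ℙ = gaussianReal 0 v)
    (n : ℕ) (σ : Equiv.Perm (Fin n)) (y : Fin n → Vspan f) :
    (Mmap hP hmeas hgauss n) (fun k => y (σ k)) = (Mmap hP hmeas hgauss n) y := by
  show (∫ ω, ∏ i, (y (σ i) : Ω → ℝ) ω) = ∫ ω, ∏ i, (y i : Ω → ℝ) ω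
  congr 1
  funext ω
  exact Equiv.prod_comp σ (fun i => (y i : Ω → ℝ) ω)

lemma matchings_image {n : ℕ} (σ : Equiv.Perm (Fin n)) {P : Finset (Finset (Fin n))}
    (hP : P ∈ matchings (Finset.univ : Finset (Fin n))) :
    P.image (Finset.image ⇑σ) ∈ matchings (Finset.univ : Finset (Fin n)) := by
  rw [mem_matchings] at hP ⊢
  constructor
  · intro B' hB'
    obtain ⟨B, hB, rfl⟩ := Finset.mem_image.mp hB'
    refine ⟨Finset.subset_univ _, ?_⟩
    rw [Finset.card_image_of_injective _ σ.injective]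
    exact (hP.1 B hB).2
  · intro i _
    obtain ⟨B, ⟨hB, hmem⟩, huniq⟩ := hP.2 (σ.symm i) (Finset.mem_univ _)
    refine ⟨B.image ⇑σ, ⟨Finset.mem_image_of_mem _ hB,
      Finset.mem_image.mpr ⟨σ.symm i, hmem, σ.apply_symm_apply i⟩⟩, ?_⟩
    rintro B' ⟨hB', hiB'⟩
    obtain ⟨C, hC, rfl⟩ := Finset.mem_image.mp hB'
    obtain ⟨c, hc, hci⟩ := Finset.mem_image.mp hiB'
    have hcs : c = σ.symm i := by rw [← hci]; simp
    rw [hcs] at hc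
    rw [huniq C ⟨hC, hc⟩]

lemma Wsym (hP : IsProbabilityMeasure (ℙ : Measure Ω))
    (hmeas : ∀ l, Measurable (f l))
    (hgauss : ∀ (n : ℕ) (ls : Fin n → Λ) (t : Fin n → ℝ), ∃ v : NNReal,
      Measure.map (fun ω => ∑ i, t i * f (ls i) ω) ℙ = gaussianReal 0 v)
    (n : ℕ) (σ : Equiv.Perm (Fin n)) (y : Fin n → Vspan f) :
    (Wmap hP hmeas hgauss n) (fun k => y (σ k)) = (Wmap hP hmeas hgauss n) y := by
  show (∑ P ∈ matchings (Finset.univ : Finset (Fin n)),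
      ∏ B ∈ P, ∫ ω, ∏ j ∈ B, (y (σ j) : Ω → ℝ) ω)
    = ∑ P ∈ matchings (Finset.univ : Finset (Fin n)),
      ∏ B ∈ P, ∫ ω, ∏ j ∈ B, (y j : Ω → ℝ) ω
  refine Finset.sum_bij' (fun P _ => P.image (Finset.image ⇑σ))
    (fun P _ => P.image (Finset.image ⇑σ.symm))
    (fun P hp => matchings_image σ hp)
    (fun P hp => matchings_image σ.symm hp) ?_ ?_ ?_
  · intro P _
    simp only [Finset.image_image]
    have hcomp : (Finset.image ⇑σ.symm ∘ Finset.image ⇑σ) = id := by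
      funext B
      simp only [Function.comp_apply, Finset.image_image, id]
      have : (⇑σ.symm ∘ ⇑σ) = id := by funext a; simp
      rw [this, Finset.image_id]
    rw [hcomp, Finset.image_id]
  · intro P _
    simp only [Finset.image_image]
    have hcomp : (Finset.image ⇑σ ∘ Finset.image ⇑σ.symm) = id := by
      funext B
      simp only [Function.comp_apply, Finset.image_image, id]
      have : (⇑σ ∘ ⇑σ.symm) = id := by funext a; simp
      rw [this, Finset.image_id]
    rw [hcomp, Finset.image_id]
  · intro P _
    rw [Finset.prod_image (fun B _ C _ h => Finset.image_injective σ.injective h)]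
    refine Finset.prod_congr rfl fun B _ => ?_
    congr 1
    funext ω
    rw [Finset.prod_image (fun a _ b _ h => σ.injective h)]

lemma Mdiag (hP : IsProbabilityMeasure (ℙ : Measure Ω))
    (hmeas : ∀ l, Measurable (f l))
    (hgauss : ∀ (n : ℕ) (ls : Fin n → Λ) (t : Fin n → ℝ), ∃ v : NNReal,
      Measure.map (fun ω => ∑ i, t i * f (ls i) ω) ℙ = gaussianReal 0 v)
    (n : ℕ) (g : Vspan f) (hgm : Measurable (g : Ω → ℝ)) {v : ℝ≥0}
    (hv : Measure.map (g : Ω → ℝ) ℙ = gaussianReal 0 v) :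
    (Mmap hP hmeas hgauss n) (fun _ => g) = (cnt n : ℝ) * (v:ℝ) ^ (n / 2) := by
  show (∫ ω, ∏ _i : Fin n, (g : Ω → ℝ) ω) = _
  have hpt : ∀ ω : Ω, ∏ _i : Fin n, (g : Ω → ℝ) ω = ((g : Ω → ℝ) ω) ^ n := by
    intro ω
    rw [Finset.prod_const, Finset.card_univ, Fintype.card_fin]
  calc (∫ ω, ∏ _i : Fin n, (g : Ω → ℝ) ω) = ∫ ω, ((g : Ω → ℝ) ω) ^ n := by simp only [hpt]
    _ = (cnt n : ℝ) * (v:ℝ) ^ (n / 2) := (moment_of_map hgm hv n).2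

lemma Wdiag (hP : IsProbabilityMeasure (ℙ : Measure Ω))
    (hmeas : ∀ l, Measurable (f l))
    (hgauss : ∀ (n : ℕ) (ls : Fin n → Λ) (t : Fin n → ℝ), ∃ v : NNReal,
      Measure.map (fun ω => ∑ i, t i * f (ls i) ω) ℙ = gaussianReal 0 v)
    (n : ℕ) (g : Vspan f) (hgm : Measurable (g : Ω → ℝ)) {v : ℝ≥0}
    (hv : Measure.map (g : Ω → ℝ) ℙ = gaussianReal 0 v) :
    (Wmap hP hmeas hgauss n) (fun _ => g) = (cnt n : ℝ) * (v:ℝ) ^ (n / 2) := by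
  show (∑ P ∈ matchings (Finset.univ : Finset (Fin n)),
      ∏ B ∈ P, ∫ ω, ∏ _j ∈ B, (g : Ω → ℝ) ω) = _
  have hblock : ∀ P ∈ matchings (Finset.univ : Finset (Fin n)), ∀ B ∈ P,
      (∫ ω, ∏ _j ∈ B, (g : Ω → ℝ) ω) = (v : ℝ) := by
    intro P hp B hB
    have hcard := ((mem_matchings.mp hp).1 B hB).2
    have hpt : ∀ ω : Ω, ∏ _j ∈ B, (g : Ω → ℝ) ω = ((g : Ω → ℝ) ω) ^ 2 := by
      intro ω
      rw [Finset.prod_const, hcard]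
    have hcnt2 : cnt 2 = 1 := rfl
    calc (∫ ω, ∏ _j ∈ B, (g : Ω → ℝ) ω) = ∫ ω, ((g : Ω → ℝ) ω) ^ 2 := by simp only [hpt]
      _ = (cnt 2 : ℝ) * (v:ℝ) ^ (2 / 2) := (moment_of_map hgm hv 2).2
      _ = (v : ℝ) := by rw [hcnt2]; norm_num
  have hterm : ∀ P ∈ matchings (Finset.univ : Finset (Fin n)),
      (∏ B ∈ P, ∫ ω, ∏ _j ∈ B, (g : Ω → ℝ) ω) = (v:ℝ) ^ (n / 2) := by
    intro P hp
    rw [Finset.prod_congr rfl (hblock P hp), Finset.prod_const]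
    congr 1
    have h2 := matchings_card_blocks (mem_matchings.mpr (mem_matchings.mp hp))
    rw [Finset.card_univ, Fintype.card_fin] at h2
    omega
  rw [Finset.sum_congr rfl hterm, Finset.sum_const, card_matchings,
    Finset.card_univ, Fintype.card_fin, nsmul_eq_mul]

lemma wick_main (hP : IsProbabilityMeasure (ℙ : Measure Ω))
    (hmeas : ∀ l, Measurable (f l))
    (hgauss : ∀ (n : ℕ) (ls : Fin n → Λ) (t : Fin n → ℝ), ∃ v : NNReal,
      Measure.map (fun ω => ∑ i, t i * f (ls i) ω) ℙ = gaussianReal 0 v)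
    (n : ℕ) (x : Fin n → Vspan f) :
    ∫ ω, ∏ i, (x i : Ω → ℝ) ω
      = ∑ P ∈ matchings (Finset.univ : Finset (Fin n)),
          ∏ B ∈ P, ∫ ω, ∏ j ∈ B, (x j : Ω → ℝ) ω := by
  have hM := polarization (Mmap hP hmeas hgauss n) (Msym hP hmeas hgauss n) x
  have hW := polarization (Wmap hP hmeas hgauss n) (Wsym hP hmeas hgauss n) x
  have hdiag : ∀ S ∈ (Finset.univ : Finset (Fin n)).powerset,
      (-1:ℝ)^(n - S.card) * (Mmap hP hmeas hgauss n) (fun _ => ∑ i ∈ S, x i)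
        = (-1:ℝ)^(n - S.card) * (Wmap hP hmeas hgauss n) (fun _ => ∑ i ∈ S, x i) := by
    intro S _
    congr 1
    obtain ⟨hgm, v, hv⟩ := gauss_of_mem hmeas hgauss (∑ i ∈ S, x i : Vspan f).2
    rw [Mdiag hP hmeas hgauss n _ hgm hv, Wdiag hP hmeas hgauss n _ hgm hv]
  have hfac : ((n.factorial : ℝ)) ≠ 0 := Nat.cast_ne_zero.mpr (Nat.factorial_ne_zero n)
  have hMW : (n.factorial : ℝ) * (Mmap hP hmeas hgauss n) x
      = (n.factorial : ℝ) * (Wmap hP hmeas hgauss n) x := by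
    rw [hM, hW]
    exact Finset.sum_congr rfl hdiag
  exact mul_left_cancel₀ hfac hMW

end Main

end Wick

open MeasureTheory ProbabilityTheory
open scoped Classical

/-- Wick's formula.  If `(f λ)` is a centred real Gaussian family
(every finite real-linear combination is a centred Gaussian), then
`E(f_{λ₁}⋯f_{λ_n}) = Σ_{π ∈ P₂(n)} Π_{{k,l} ∈ π} E(f_{λ_k} f_{λ_l})`, the sum
over all pairings (partitions into blocks of size two) of `{1,…,n}`; in
particular the sum is empty and the expectation is `0` when `n` is odd. -/
theorem statement14 {Ω Λ : Type*} [MeasureSpace Ω]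
    (hP : IsProbabilityMeasure (ℙ : Measure Ω))
    (f : Λ → Ω → ℝ) (hmeas : ∀ l, Measurable (f l))
    (hgauss : ∀ (n : ℕ) (ls : Fin n → Λ) (t : Fin n → ℝ), ∃ v : NNReal,
      Measure.map (fun ω => ∑ i, t i * f (ls i) ω) ℙ = gaussianReal 0 v)
    (n : ℕ) (ls : Fin n → Λ) :
    ∫ ω, ∏ i, f (ls i) ω =
      ∑ P ∈ Finset.univ.filter (fun P : Finset (Finset (Fin n)) =>
          (∀ B ∈ P, B.card = 2) ∧ ∀ i : Fin n, ∃! B, B ∈ P ∧ i ∈ B),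
        ∏ B ∈ P, ∫ ω, ∏ j ∈ B, f (ls j) ω := by
  have hset : (Finset.univ.filter (fun P : Finset (Finset (Fin n)) =>
      (∀ B ∈ P, B.card = 2) ∧ ∀ i : Fin n, ∃! B, B ∈ P ∧ i ∈ B))
      = Wick.matchings (Finset.univ : Finset (Fin n)) := by
    ext P
    simp only [Finset.mem_filter, Finset.mem_univ, true_and, Wick.mem_matchings,
      Wick.isMatching]
    constructor
    · rintro ⟨h1, h2⟩
      exact ⟨fun B hB => ⟨Finset.subset_univ B, h1 B hB⟩, fun i _ => h2 i⟩
    · rintro ⟨h1, h2⟩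
      exact ⟨fun B hB => (h1 B hB).2, fun i => h2 i trivial⟩
  rw [hset]
  exact Wick.wick_main hP hmeas hgauss n
    (fun i => ⟨f (ls i), Submodule.subset_span (Set.mem_range_self _)⟩)

end
end
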